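/- arXiv:1708.09733 — 4 statements merged into one kernel-verified Lean document; each statement's English description precedes it below -/
import Mathlib

section
/- Sharpness for 1 < p < ∞: if g ≥ 0 is integrable with respect to dt/t on (0,∞), then lim_{λ→∞} (2λ)^{-1} ∫_{e^{-λ}}^{e^λ} ∫_{e^{-λ}}^{e^λ} g(r/t) (dr/r)(dt/t) = ∫₀^∞ g(t) dt/t. -/
open MeasureTheory Set Filter Real Topology

/-- The integrand `g t / t`, extended by zero off `(0, ∞)`. -/
private noncomputable def msF (g : ℝ → ℝ) : ℝ → ℝ :=
  Set.indicator (Set.Ioi 0) (fun s => g s / s)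

/-- Primitive of `msF g` starting from `-1`. -/
private noncomputable def msPhi (g : ℝ → ℝ) (x : ℝ) : ℝ := ∫ s in (-1:ℝ)..x, msF g s

/-- `msH g w = ∫_{e^{-w}}^{e^w} g(s)/s ds`. -/
private noncomputable def msH (g : ℝ → ℝ) (w : ℝ) : ℝ :=
  msPhi g (Real.exp w) - msPhi g (Real.exp (-w))

/-- Sharpness for `1 < p < ∞`:
`lim_{λ→∞} (2λ)⁻¹ ∫_{e^{-λ}}^{e^λ} ∫_{e^{-λ}}^{e^λ} g(r/t) (dr/r)(dt/t) = ∫₀^∞ g dt/t`. -/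
theorem mellin_sharp_limit (g : ℝ → ℝ) (hg0 : ∀ t ∈ Set.Ioi (0 : ℝ), 0 ≤ g t)
    (hg1 : IntegrableOn (fun t => g t / t) (Set.Ioi (0 : ℝ))) :
    Tendsto
      (fun lam : ℝ => (2 * lam)⁻¹ *
        ∫ t in Set.Icc (Real.exp (-lam)) (Real.exp lam),
          (∫ r in Set.Icc (Real.exp (-lam)) (Real.exp lam), g (r / t) / r) / t)
      atTop (nhds (∫ t in Set.Ioi (0 : ℝ), g t / t)) := by
  have hFnn : ∀ s, 0 ≤ msF g s := fun s =>
    Set.indicator_nonneg (fun u hu => div_nonneg (hg0 u hu) (le_of_lt hu)) s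
  have hFint : Integrable (msF g) := hg1.integrable_indicator measurableSet_Ioi
  have hItot : (∫ s, msF g s) = ∫ t in Set.Ioi (0:ℝ), g t / t := by
    unfold msF
    exact integral_indicator measurableSet_Ioi
  have hInn : 0 ≤ ∫ t in Set.Ioi (0:ℝ), g t / t :=
    setIntegral_nonneg measurableSet_Ioi (fun t ht => div_nonneg (hg0 t ht) (le_of_lt ht))
  set I := ∫ t in Set.Ioi (0:ℝ), g t / t with hIdef
  have hphicont : Continuous (msPhi g) :=
    intervalIntegral.continuous_primitive (fun a b => hFint.intervalIntegrable) (-1)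
  have hadj : ∀ x y : ℝ, (msPhi g x) + (∫ s in x..y, msF g s) = msPhi g y := fun x y =>
    intervalIntegral.integral_add_adjacent_intervals hFint.intervalIntegrable
      hFint.intervalIntegrable
  have hphi_mono : Monotone (msPhi g) := by
    intro x y hxy
    have h1 := hadj x y
    have h2 : 0 ≤ ∫ s in x..y, msF g s :=
      intervalIntegral.integral_nonneg hxy (fun u _ => hFnn u)
    linarith
  have hphi_neg1 : msPhi g (-1) = 0 := intervalIntegral.integral_same
  have hphi_nonneg : ∀ x, -1 ≤ x → 0 ≤ msPhi g x := by
    intro x hx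
    have := hphi_mono hx
    linarith [hphi_neg1]
  have hphi_le : ∀ x, msPhi g x ≤ I := by
    intro x
    rcases le_or_gt (-1:ℝ) x with hx | hx
    · have h1 : msPhi g x = ∫ s in Set.Ioc (-1:ℝ) x, msF g s :=
        intervalIntegral.integral_of_le hx
      have h2 : (∫ s in Set.Ioc (-1:ℝ) x, msF g s) ≤ ∫ s, msF g s :=
        setIntegral_le_integral hFint (Filter.Eventually.of_forall hFnn)
      rw [h1]; rw [hItot] at h2; exact h2
    · have h3 := hphi_mono hx.le
      have h4 := hphi_neg1
      linarith [hInn]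
  have hphi0 : msPhi g 0 = 0 := by
    unfold msPhi
    rw [intervalIntegral.integral_of_le (by norm_num : (-1:ℝ) ≤ 0)]
    have he : Set.EqOn (msF g) 0 (Set.Ioc (-1:ℝ) 0) := by
      intro s hs
      show msF g s = 0
      unfold msF
      exact Set.indicator_of_notMem (by simpa using hs.2) _
    rw [setIntegral_congr_fun measurableSet_Ioc he]
    simp
  have hphi_top : Tendsto (fun w => msPhi g (Real.exp w)) atTop (𝓝 I) := by
    have h1 : (∫ s in Set.Ioi (-1:ℝ), msF g s) = I := by
      rw [hIdef]
      unfold msF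
      rw [setIntegral_indicator measurableSet_Ioi, Set.Ioi_inter_Ioi]
      have : ((-1:ℝ) ⊔ 0) = 0 := sup_eq_right.mpr (by norm_num)
      rw [this]
    have h2 := intervalIntegral_tendsto_integral_Ioi (-1) hFint.integrableOn
      Real.tendsto_exp_atTop
    rw [h1] at h2
    exact h2
  have hphi_bot : Tendsto (fun w : ℝ => msPhi g (Real.exp (-w))) atTop (𝓝 0) := by
    have hexp0 : Tendsto (fun w : ℝ => Real.exp (-w)) atTop (𝓝 0) :=
      Real.tendsto_exp_atBot.comp tendsto_neg_atTop_atBot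
    have h2 := (hphicont.tendsto 0).comp hexp0
    rw [hphi0] at h2
    exact h2
  have htend : Tendsto (msH g) atTop (𝓝 I) := by
    have h2 : Tendsto (fun w => msPhi g (Real.exp w) - msPhi g (Real.exp (-w))) atTop (𝓝 I) := by
      simpa using hphi_top.sub hphi_bot
    exact h2
  have hHcont : Continuous (msH g) :=
    (hphicont.comp Real.continuous_exp).sub
      (hphicont.comp (Real.continuous_exp.comp continuous_neg))
  -- Dominated convergence on `Ioc 0 1`
  have main : Tendsto (fun lam : ℝ => ∫ x in Set.Ioc (0:ℝ) 1, msH g (2*lam*x)) atTop (𝓝 I) := by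
    have hmeas : ∀ᶠ lam : ℝ in atTop,
        AEStronglyMeasurable (fun x => msH g (2*lam*x)) (volume.restrict (Set.Ioc (0:ℝ) 1)) :=
      Filter.Eventually.of_forall fun lam =>
        (hHcont.comp (by continuity)).aestronglyMeasurable
    have hbd : ∀ᶠ lam : ℝ in atTop,
        ∀ᵐ x ∂(volume.restrict (Set.Ioc (0:ℝ) 1)), ‖msH g (2*lam*x)‖ ≤ I := by
      filter_upwards [eventually_gt_atTop (0:ℝ)] with lam hlam
      filter_upwards [ae_restrict_mem measurableSet_Ioc] with x hx
      set w := 2*lam*x with hw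
      have hw0 : 0 < w := by
        have := hx.1; positivity
      have e1 : Real.exp (-w) ≤ Real.exp w := Real.exp_le_exp.mpr (by linarith)
      have l1 : 0 ≤ msH g w := by
        have := hphi_mono e1; simp only [msH]; linarith
      have l2 : msH g w ≤ I := by
        have h1 := hphi_le (Real.exp w)
        have h2 := hphi_nonneg (Real.exp (-w)) (by linarith [Real.exp_pos (-w)])
        simp only [msH]; linarith
      rw [Real.norm_eq_abs, abs_of_nonneg l1]; exact l2
    have hint : Integrable (fun _ : ℝ => I) (volume.restrict (Set.Ioc (0:ℝ) 1)) :=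
      (integrableOn_const_iff (C := I)).mpr (Or.inr measure_Ioc_lt_top)
    have hlim : ∀ᵐ x ∂(volume.restrict (Set.Ioc (0:ℝ) 1)),
        Tendsto (fun lam : ℝ => msH g (2*lam*x)) atTop (𝓝 I) := by
      filter_upwards [ae_restrict_mem measurableSet_Ioc] with x hx
      have harg : Tendsto (fun lam : ℝ => 2*lam*x) atTop atTop := by
        have he : (fun lam : ℝ => 2*lam*x) = fun lam => (2*x)*lam := by funext lam; ring
        rw [he]
        exact Filter.Tendsto.const_mul_atTop (by linarith [hx.1]) tendsto_id
      exact htend.comp harg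
    have hdct := tendsto_integral_filter_of_dominated_convergence (fun _ : ℝ => I)
      hmeas hbd hint hlim
    simpa using hdct
  refine Filter.Tendsto.congr' ?_ main
  filter_upwards [eventually_gt_atTop (0:ℝ)] with lam hlam
  show (∫ x in Set.Ioc (0:ℝ) 1, msH g (2*lam*x)) = (2*lam)⁻¹ *
    ∫ t in Set.Icc (Real.exp (-lam)) (Real.exp lam),
      (∫ r in Set.Icc (Real.exp (-lam)) (Real.exp lam), g (r / t) / r) / t
  have hab : Real.exp (-lam) ≤ Real.exp lam := Real.exp_le_exp.mpr (by linarith)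
  have ha : (0:ℝ) < Real.exp (-lam) := Real.exp_pos _
  set a := Real.exp (-lam) with hadef
  set b := Real.exp lam with hbdef
  -- inner integral computation
  have inner_eq : ∀ t : ℝ, 0 < t → (∫ r in Set.Icc a b, g (r / t) / r)
      = msPhi g (b / t) - msPhi g (a / t) := by
    intro t ht0
    have e : Set.EqOn (fun r => g (r / t) / r)
        (fun r => (fun s => msF g s) (r / t) / t) (Set.uIcc a b) := by
      intro r hr
      rw [Set.uIcc_of_le hab] at hr
      have hr0 : 0 < r := lt_of_lt_of_le ha hr.1
      have hrt : r / t ∈ Set.Ioi (0:ℝ) := div_pos hr0 ht0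
      show g (r / t) / r = msF g (r / t) / t
      unfold msF
      rw [Set.indicator_of_mem hrt]
      have hr' : r ≠ 0 := ne_of_gt hr0
      have ht' : t ≠ 0 := ne_of_gt ht0
      field_simp
    calc (∫ r in Set.Icc a b, g (r / t) / r)
        = ∫ r in a..b, g (r / t) / r := by
          rw [integral_Icc_eq_integral_Ioc, intervalIntegral.integral_of_le hab]
      _ = ∫ r in a..b, (fun s => msF g s) (r / t) / t := intervalIntegral.integral_congr e
      _ = (∫ r in a..b, (fun s => msF g s) (r / t)) / t :=
          intervalIntegral.integral_div t _
      _ = (t • ∫ s in a/t..b/t, msF g s) / t := by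
          rw [intervalIntegral.integral_comp_div (fun s => msF g s) (ne_of_gt ht0)]
      _ = ∫ s in a/t..b/t, msF g s := by
          rw [smul_eq_mul]
          field_simp
      _ = msPhi g (b / t) - msPhi g (a / t) := by
          have := hadj (a/t) (b/t); linarith
  have congr1 : Set.EqOn (fun t => (∫ r in Set.Icc a b, g (r / t) / r) / t)
      (fun t => (msPhi g (b / t) - msPhi g (a / t)) / t) (Set.uIcc a b) := by
    intro t ht
    rw [Set.uIcc_of_le hab] at ht
    have ht0 : 0 < t := lt_of_lt_of_le ha ht.1
    show (∫ r in Set.Icc a b, g (r / t) / r) / t = (msPhi g (b / t) - msPhi g (a / t)) / t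
    rw [inner_eq t ht0]
  have hsub := intervalIntegral.integral_comp_smul_deriv'
    (f := Real.exp) (f' := Real.exp) (a := -lam) (b := lam)
    (g := fun t => (msPhi g (b / t) - msPhi g (a / t)) / t)
    (fun x _ => Real.hasDerivAt_exp x) Real.continuous_exp.continuousOn ?cont
  case cont =>
    have hG : ContinuousOn (fun t => (msPhi g (b / t) - msPhi g (a / t)) / t)
        (Set.Ioi (0:ℝ)) := by
      apply ContinuousOn.div
      · exact (hphicont.comp_continuousOn
          (continuousOn_const.div continuousOn_id fun t ht => ne_of_gt ht)).sub
          (hphicont.comp_continuousOn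
          (continuousOn_const.div continuousOn_id fun t ht => ne_of_gt ht))
      · exact continuousOn_id
      · intro t ht; exact ne_of_gt ht
    refine hG.mono ?_
    rintro s ⟨x, -, rfl⟩
    exact Real.exp_pos x
  have congr2 : Set.EqOn
      (fun u => Real.exp u • ((fun t => (msPhi g (b / t) - msPhi g (a / t)) / t) ∘ Real.exp) u)
      (fun u => (fun w => msPhi g (Real.exp w)) (lam - u)
        - (fun w => msPhi g (Real.exp (-w))) (lam + u)) (Set.uIcc (-lam) lam) := by
    intro u _
    show Real.exp u • ((fun t => (msPhi g (b / t) - msPhi g (a / t)) / t) ∘ Real.exp) u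
      = msPhi g (Real.exp (lam - u)) - msPhi g (Real.exp (-(lam + u)))
    simp only [Function.comp_apply, smul_eq_mul]
    rw [hadef, hbdef, ← Real.exp_sub, ← Real.exp_sub,
      mul_comm, div_mul_cancel₀ _ (Real.exp_ne_zero u)]
    have h1 : -lam - u = -(lam + u) := by ring
    rw [h1]
  have hi1 : IntervalIntegrable (fun u => (fun w => msPhi g (Real.exp w)) (lam - u))
      volume (-lam) lam :=
    ((hphicont.comp Real.continuous_exp).comp
      (continuous_const.sub continuous_id)).intervalIntegrable _ _
  have hi2 : IntervalIntegrable (fun u => (fun w => msPhi g (Real.exp (-w))) (lam + u))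
      volume (-lam) lam :=
    ((hphicont.comp (Real.continuous_exp.comp continuous_neg)).comp
      (continuous_const.add continuous_id)).intervalIntegrable _ _
  have hi3 : IntervalIntegrable (fun w => msPhi g (Real.exp w)) volume 0 (2*lam) :=
    (hphicont.comp Real.continuous_exp).intervalIntegrable _ _
  have hi4 : IntervalIntegrable (fun w => msPhi g (Real.exp (-w))) volume 0 (2*lam) :=
    (hphicont.comp (Real.continuous_exp.comp continuous_neg)).intervalIntegrable _ _
  have key : (∫ t in Set.Icc a b, (∫ r in Set.Icc a b, g (r / t) / r) / t)
      = ∫ w in (0:ℝ)..(2*lam), msH g w := by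
    calc (∫ t in Set.Icc a b, (∫ r in Set.Icc a b, g (r / t) / r) / t)
        = ∫ t in a..b, (∫ r in Set.Icc a b, g (r / t) / r) / t := by
          rw [integral_Icc_eq_integral_Ioc, intervalIntegral.integral_of_le hab]
      _ = ∫ t in a..b, (fun t => (msPhi g (b / t) - msPhi g (a / t)) / t) t :=
          intervalIntegral.integral_congr congr1
      _ = ∫ u in (-lam)..lam,
            Real.exp u • ((fun t => (msPhi g (b / t) - msPhi g (a / t)) / t) ∘ Real.exp) u :=
          hsub.symm
      _ = ∫ u in (-lam)..lam, ((fun w => msPhi g (Real.exp w)) (lam - u)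
            - (fun w => msPhi g (Real.exp (-w))) (lam + u)) :=
          intervalIntegral.integral_congr congr2
      _ = (∫ u in (-lam)..lam, (fun w => msPhi g (Real.exp w)) (lam - u))
            - ∫ u in (-lam)..lam, (fun w => msPhi g (Real.exp (-w))) (lam + u) :=
          intervalIntegral.integral_sub hi1 hi2
      _ = (∫ w in (0:ℝ)..(2*lam), msPhi g (Real.exp w))
            - ∫ w in (0:ℝ)..(2*lam), msPhi g (Real.exp (-w)) := by
          rw [intervalIntegral.integral_comp_sub_left (fun w => msPhi g (Real.exp w)) lam,
            intervalIntegral.integral_comp_add_left (fun w => msPhi g (Real.exp (-w))) lam]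
          have b1 : lam - lam = (0:ℝ) := by ring
          have b2 : lam - -lam = 2*lam := by ring
          have b3 : lam + -lam = (0:ℝ) := by ring
          have b4 : lam + lam = 2*lam := by ring
          rw [b1, b2, b3, b4]
      _ = ∫ w in (0:ℝ)..(2*lam), (msPhi g (Real.exp w) - msPhi g (Real.exp (-w))) :=
          (intervalIntegral.integral_sub hi3 hi4).symm
      _ = ∫ w in (0:ℝ)..(2*lam), msH g w := by
          apply intervalIntegral.integral_congr
          intro w _
          simp [msH]
  rw [key, ← intervalIntegral.integral_of_le zero_le_one,
    intervalIntegral.integral_comp_mul_left (msH g)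
      (mul_ne_zero two_ne_zero (ne_of_gt hlam))]
  rw [smul_eq_mul]
  norm_num
end

section
/- One-dimensional sharp Hardy inequality: let 1 < p < ∞ and a, b ∈ ℝ with a/p' > b/p and a + b = D > 0, where p' = p/(p-1). Define Hf(r) = ∫₀^r f(t) t^{D-1} dt for f on (0,∞). Then ‖r^{-a} Hf(r)‖_{L^p((0,∞), r^{D-1}dr)} ≤ C ‖r^b f(r)‖_{L^p((0,∞), r^{D-1}dr)} with C = (a/p' − b/p)^{-1}, and this constant is sharp. -/
open MeasureTheory Set
open scoped ENNReal

/-- The measure `r^{D-1} dr` on `(0, ∞)`. -/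
noncomputable def powMeasure (D : ℝ) : Measure ℝ :=
  (volume.restrict (Set.Ioi (0 : ℝ))).withDensity (fun r => ENNReal.ofReal (r ^ (D - 1)))


lemma lint_Ioc_rpow {c r : ℝ} (hc : -1 < c) (hr : 0 ≤ r) :
    ∫⁻ t in Ioc (0:ℝ) r, ENNReal.ofReal (t ^ c) = ENNReal.ofReal (r ^ (c+1) / (c+1)) := by
  rw [← ofReal_integral_eq_lintegral_ofReal]
  · rw [← intervalIntegral.integral_of_le hr, integral_rpow (Or.inl hc),
      Real.zero_rpow (by linarith), sub_zero]
  · exact (intervalIntegrable_iff_integrableOn_Ioc_of_le hr).mp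
      (intervalIntegral.intervalIntegrable_rpow' hc)
  · exact (ae_restrict_iff' measurableSet_Ioc).mpr <| .of_forall fun t ht =>
      Real.rpow_nonneg ht.1.le _

lemma lint_Ioi_rpow {c t : ℝ} (hc : c < -1) (ht : 0 < t) :
    ∫⁻ r in Ioi t, ENNReal.ofReal (r ^ c) = ENNReal.ofReal (t ^ (c+1) / (-(c+1))) := by
  rw [← ofReal_integral_eq_lintegral_ofReal (integrableOn_Ioi_rpow_of_lt hc ht)]
  · rw [integral_Ioi_rpow_of_lt hc ht]
    congr 1; rw [div_neg, neg_div]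
  · exact (ae_restrict_iff' measurableSet_Ioi).mpr <| .of_forall fun r hr =>
      Real.rpow_nonneg ((ht.trans hr).le) _

lemma ofReal_rpow_mul_ofReal_rpow {r : ℝ} (hr : 0 < r) (x y : ℝ) :
    ENNReal.ofReal (r ^ x) * ENNReal.ofReal (r ^ y) = ENNReal.ofReal (r ^ (x + y)) := by
  rw [← ENNReal.ofReal_mul (Real.rpow_nonneg hr.le _), ← Real.rpow_add hr]

lemma hardy_key {D p a b : ℝ} (hp : 1 < p) (hγ : 0 < a - D / p) (hsum : a + b = D)
    {φ : ℝ → ℝ≥0∞} (hφ : Measurable φ) :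
    ∫⁻ r in Ioi (0:ℝ),
        (ENNReal.ofReal (r ^ (-a)) * ∫⁻ t in Ioc (0:ℝ) r, φ t * ENNReal.ofReal (t ^ (D-1))) ^ p
          * ENNReal.ofReal (r ^ (D-1)) ≤
      ENNReal.ofReal (a - D/p)⁻¹ ^ p *
        ∫⁻ t in Ioi (0:ℝ), (ENNReal.ofReal (t ^ b) * φ t) ^ p * ENNReal.ofReal (t ^ (D-1)) := by
  have hb : b = D - a := by linarith
  subst hb
  have hpq : p.HolderConjugate (p/(p-1)) := Real.HolderConjugate.conjExponent hp
  set q : ℝ := p / (p - 1) with hqdef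
  have hp0 : 0 < p := hpq.pos
  have hq0 : 0 < q := hpq.symm.pos
  have hp1 : p - 1 > 0 := by linarith
  set γ : ℝ := a - D / p with hγdef
  set m : ℝ := (D - a) + γ / p with hmdef
  set ψ : ℝ → ℝ≥0∞ := fun t => φ t ^ p * ENNReal.ofReal (t ^ (m*p + (D-1))) with hψdef
  have hψm : Measurable ψ := by fun_prop
  -- exponent identities
  have hE1 : m + (D-1)/p + (-m + (D-1)/q) = D - 1 := by
    rw [hqdef]; field_simp; ring
  have hE2 : (m + (D-1)/p) * p = m*p + (D-1) := by field_simp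
  have hE3 : (-m + (D-1)/q) * q = γ - 1 := by
    rw [hmdef, hγdef, hqdef]; field_simp; ring
  have hE4 : -a*p + (γ*(p-1) + (D-1)) = -γ-1 := by
    rw [hγdef]; field_simp; ring
  have hE5 : m*p + (D-1) + -γ = (D-a)*p + (D-1) := by
    rw [hmdef]; field_simp; ring
  -- Step 1: pointwise Hölder bound
  have key1 : ∀ r ∈ Ioi (0:ℝ),
      (∫⁻ t in Ioc (0:ℝ) r, φ t * ENNReal.ofReal (t ^ (D-1))) ≤
        (∫⁻ t in Ioc (0:ℝ) r, ψ t) ^ (1/p) * ENNReal.ofReal (r ^ γ / γ) ^ (1/q) := by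
    intro r hr
    calc ∫⁻ t in Ioc (0:ℝ) r, φ t * ENNReal.ofReal (t ^ (D-1))
        = ∫⁻ t in Ioc (0:ℝ) r,
            ((fun t => φ t * ENNReal.ofReal (t ^ (m + (D-1)/p))) *
             fun t => ENNReal.ofReal (t ^ (-m + (D-1)/q))) t := by
          refine setLIntegral_congr_fun measurableSet_Ioc (fun t ht => ?_)
          simp only [Pi.mul_apply]
          rw [mul_assoc, ← ENNReal.ofReal_mul (Real.rpow_nonneg ht.1.le _),
            ← Real.rpow_add ht.1, hE1]
      _ ≤ (∫⁻ t in Ioc (0:ℝ) r, (φ t * ENNReal.ofReal (t ^ (m + (D-1)/p))) ^ p) ^ (1/p) *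
          (∫⁻ t in Ioc (0:ℝ) r, ENNReal.ofReal (t ^ (-m + (D-1)/q)) ^ q) ^ (1/q) :=
          ENNReal.lintegral_mul_le_Lp_mul_Lq _ hpq (by fun_prop) (by fun_prop)
      _ = (∫⁻ t in Ioc (0:ℝ) r, ψ t) ^ (1/p) * ENNReal.ofReal (r ^ γ / γ) ^ (1/q) := by
          congr 1
          · congr 1
            refine setLIntegral_congr_fun measurableSet_Ioc (fun t ht => ?_)
            rw [ENNReal.mul_rpow_of_nonneg _ _ hp0.le,
              ENNReal.ofReal_rpow_of_pos (Real.rpow_pos_of_pos ht.1 _),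
              ← Real.rpow_mul ht.1.le, hE2]
          · congr 1
            rw [show (∫⁻ t in Ioc (0:ℝ) r, ENNReal.ofReal (t ^ (-m + (D-1)/q)) ^ q)
                = ∫⁻ t in Ioc (0:ℝ) r, ENNReal.ofReal (t ^ (γ - 1)) from
              setLIntegral_congr_fun measurableSet_Ioc (fun t ht => by
                rw [ENNReal.ofReal_rpow_of_pos (Real.rpow_pos_of_pos ht.1 _),
                  ← Real.rpow_mul ht.1.le, hE3]),
              lint_Ioc_rpow (by linarith) (le_of_lt hr), sub_add_cancel]
  have hγinv0 : ENNReal.ofReal γ⁻¹ ≠ 0 := (ENNReal.ofReal_pos.mpr (inv_pos.mpr hγ)).ne'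
  have hfin : ENNReal.ofReal γ⁻¹ ^ (p-1) ≠ ∞ :=
    ENNReal.rpow_ne_top_of_nonneg (by linarith) ENNReal.ofReal_ne_top
  have hE0 : (1/q) * p = p - 1 := by rw [hqdef]; field_simp
  calc ∫⁻ r in Ioi (0:ℝ), (ENNReal.ofReal (r ^ (-a)) *
          ∫⁻ t in Ioc (0:ℝ) r, φ t * ENNReal.ofReal (t ^ (D-1))) ^ p * ENNReal.ofReal (r ^ (D-1))
      ≤ ∫⁻ r in Ioi (0:ℝ), ENNReal.ofReal γ⁻¹ ^ (p-1) *
          (ENNReal.ofReal (r ^ (-γ-1)) * ∫⁻ t in Ioc (0:ℝ) r, ψ t) := by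
        refine lintegral_mono_ae ((ae_restrict_iff' measurableSet_Ioi).mpr
          (.of_forall fun r hr => ?_))
        have hr' : (0:ℝ) < r := hr
        calc (ENNReal.ofReal (r ^ (-a)) *
              ∫⁻ t in Ioc (0:ℝ) r, φ t * ENNReal.ofReal (t ^ (D-1))) ^ p
                * ENNReal.ofReal (r ^ (D-1))
            ≤ (ENNReal.ofReal (r ^ (-a)) * ((∫⁻ t in Ioc (0:ℝ) r, ψ t) ^ (1/p) *
                ENNReal.ofReal (r ^ γ / γ) ^ (1/q))) ^ p * ENNReal.ofReal (r ^ (D-1)) := by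
              gcongr
              exact key1 r hr
          _ = ENNReal.ofReal γ⁻¹ ^ (p-1) *
                (ENNReal.ofReal (r ^ (-γ-1)) * ∫⁻ t in Ioc (0:ℝ) r, ψ t) := by
              rw [ENNReal.mul_rpow_of_nonneg _ _ hp0.le, ENNReal.mul_rpow_of_nonneg _ _ hp0.le,
                ← ENNReal.rpow_mul, ← ENNReal.rpow_mul,
                one_div_mul_cancel hp0.ne', ENNReal.rpow_one, hE0,
                div_eq_mul_inv (r ^ γ) γ, ENNReal.ofReal_mul (Real.rpow_nonneg hr'.le _),
                ENNReal.mul_rpow_of_nonneg _ _ (by linarith : (0:ℝ) ≤ p - 1),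
                ENNReal.ofReal_rpow_of_pos (Real.rpow_pos_of_pos hr' _),
                ENNReal.ofReal_rpow_of_pos (Real.rpow_pos_of_pos hr' _),
                ← Real.rpow_mul hr'.le, ← Real.rpow_mul hr'.le,
                show (-γ-1 : ℝ) = -a*p + (γ*(p-1) + (D-1)) from hE4.symm,
                ← ofReal_rpow_mul_ofReal_rpow hr', ← ofReal_rpow_mul_ofReal_rpow hr']
              ring
    _ = ENNReal.ofReal γ⁻¹ ^ (p-1) *
          ∫⁻ r in Ioi (0:ℝ), ENNReal.ofReal (r ^ (-γ-1)) * ∫⁻ t in Ioc (0:ℝ) r, ψ t :=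
        lintegral_const_mul' _ _ hfin
    _ = ENNReal.ofReal γ⁻¹ ^ (p-1) *
          ∫⁻ t in Ioi (0:ℝ), ψ t * ENNReal.ofReal (t ^ (-γ) / γ) := by
        congr 1
        set F : ℝ × ℝ → ℝ≥0∞ :=
          ({z : ℝ × ℝ | z.2 ∈ Ioc 0 z.1}.indicator
            (fun z => ENNReal.ofReal (z.1 ^ (-γ-1)) * ψ z.2)) with hFdef
        have hS : MeasurableSet {z : ℝ × ℝ | z.2 ∈ Ioc 0 z.1} := by
          have hSeq : {z : ℝ × ℝ | z.2 ∈ Ioc 0 z.1}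
              = {z : ℝ × ℝ | (0:ℝ) < z.2} ∩ {z : ℝ × ℝ | z.2 ≤ z.1} := by
            ext z; simp [mem_Ioc]
          rw [hSeq]
          exact (measurableSet_lt measurable_const measurable_snd).inter
            (measurableSet_le measurable_snd measurable_fst)
        have hFm : Measurable F := Measurable.indicator (by fun_prop) hS
        have step_r : ∀ r : ℝ, ∫⁻ t in Ioi (0:ℝ), F (r, t)
            = ENNReal.ofReal (r ^ (-γ-1)) * ∫⁻ t in Ioc (0:ℝ) r, ψ t := by
          intro r
          have h1 : ∀ t : ℝ, F (r, t) = (Ioc (0:ℝ) r).indicator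
              (fun t => ENNReal.ofReal (r ^ (-γ-1)) * ψ t) t := by
            intro t
            simp only [hFdef, indicator, mem_setOf_eq]
          simp_rw [h1]
          rw [lintegral_indicator measurableSet_Ioc,
            Measure.restrict_restrict measurableSet_Ioc,
            inter_eq_left.mpr Ioc_subset_Ioi_self,
            lintegral_const_mul' _ _ ENNReal.ofReal_ne_top]
        have step_t : ∀ t : ℝ, t ∈ Ioi (0:ℝ) → ∫⁻ r in Ioi (0:ℝ), F (r, t)
            = ψ t * ENNReal.ofReal (t ^ (-γ) / γ) := by
          intro t ht
          have ht' : (0:ℝ) < t := ht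
          have h1 : ∀ r : ℝ, F (r, t) = (Ici t).indicator
              (fun r => ENNReal.ofReal (r ^ (-γ-1))) r * ψ t := by
            intro r
            simp only [hFdef, indicator, mem_setOf_eq, mem_Ioc, mem_Ici]
            by_cases h : t ≤ r
            · simp [h, ht', mul_comm]
            · simp [h, ht']
          simp_rw [h1]
          have hineq : Ici t ∩ Ioi (0:ℝ) = Ici t :=
            inter_eq_left.mpr fun x hx => lt_of_lt_of_le ht' hx
          rw [lintegral_mul_const _ (Measurable.indicator (by fun_prop) measurableSet_Ici),
            lintegral_indicator measurableSet_Ici,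
            Measure.restrict_restrict measurableSet_Ici, hineq,
            ← restrict_Ioi_eq_restrict_Ici]
          have hI := lint_Ioi_rpow (show -γ-1 < -1 by linarith) ht'
          rw [show -γ-1+1 = -γ by ring, neg_neg] at hI
          rw [hI, mul_comm]
        calc ∫⁻ r in Ioi (0:ℝ), ENNReal.ofReal (r ^ (-γ-1)) * ∫⁻ t in Ioc (0:ℝ) r, ψ t
            = ∫⁻ r in Ioi (0:ℝ), ∫⁻ t in Ioi (0:ℝ), F (r, t) := by
              simp_rw [step_r]
          _ = ∫⁻ t in Ioi (0:ℝ), ∫⁻ r in Ioi (0:ℝ), F (r, t) :=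
              lintegral_lintegral_swap hFm.aemeasurable
          _ = ∫⁻ t in Ioi (0:ℝ), ψ t * ENNReal.ofReal (t ^ (-γ) / γ) :=
              setLIntegral_congr_fun measurableSet_Ioi step_t
    _ = ENNReal.ofReal γ⁻¹ ^ (p-1) * (ENNReal.ofReal γ⁻¹ *
          ∫⁻ t in Ioi (0:ℝ), (ENNReal.ofReal (t ^ (D-a)) * φ t) ^ p
            * ENNReal.ofReal (t ^ (D-1))) := by
        congr 1
        rw [← lintegral_const_mul' _ _ ENNReal.ofReal_ne_top]
        refine setLIntegral_congr_fun measurableSet_Ioi (fun t ht => ?_)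
        have ht' : (0:ℝ) < t := ht
        rw [hψdef]
        simp only
        rw [div_eq_mul_inv (t ^ (-γ)) γ, ENNReal.ofReal_mul (Real.rpow_nonneg ht'.le _),
          ENNReal.mul_rpow_of_nonneg _ _ hp0.le,
          ENNReal.ofReal_rpow_of_pos (Real.rpow_pos_of_pos ht' _),
          ← Real.rpow_mul ht'.le,
          show m*p + (D-1) = (D-a)*p + (D-1) + γ from by linarith [hE5],
          ← ofReal_rpow_mul_ofReal_rpow ht' ((D-a)*p + (D-1)) γ,
          ← ofReal_rpow_mul_ofReal_rpow ht' ((D-a)*p) (D-1)]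
        rw [show (-γ : ℝ) = -γ from rfl]
        have hcan : ENNReal.ofReal (t ^ γ) * ENNReal.ofReal (t ^ (-γ)) = 1 := by
          rw [ofReal_rpow_mul_ofReal_rpow ht', add_neg_cancel, Real.rpow_zero,
            ENNReal.ofReal_one]
        calc φ t ^ p * (ENNReal.ofReal (t ^ ((D-a)*p)) * ENNReal.ofReal (t ^ (D-1))
                * ENNReal.ofReal (t ^ γ)) * (ENNReal.ofReal (t ^ (-γ)) * ENNReal.ofReal γ⁻¹)
            = (ENNReal.ofReal (t ^ γ) * ENNReal.ofReal (t ^ (-γ))) * (ENNReal.ofReal γ⁻¹ *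
                (ENNReal.ofReal (t ^ ((D-a)*p)) * φ t ^ p * ENNReal.ofReal (t ^ (D-1)))) := by
              ring
          _ = ENNReal.ofReal γ⁻¹ * (ENNReal.ofReal (t ^ ((D-a)*p)) * φ t ^ p
                * ENNReal.ofReal (t ^ (D-1))) := by rw [hcan, one_mul]
    _ = ENNReal.ofReal (a - D/p)⁻¹ ^ p *
          ∫⁻ t in Ioi (0:ℝ), (ENNReal.ofReal (t ^ (D-a)) * φ t) ^ p
            * ENNReal.ofReal (t ^ (D-1)) := by
        rw [← mul_assoc]
        congr 1
        nth_rewrite 2 [← ENNReal.rpow_one (ENNReal.ofReal γ⁻¹)]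
        rw [← ENNReal.rpow_add _ _ hγinv0 ENNReal.ofReal_ne_top]
        norm_num
        rfl

lemma lintegral_powMeasure {D : ℝ} (g : ℝ → ℝ≥0∞) :
    ∫⁻ r, g r ∂powMeasure D = ∫⁻ r in Ioi (0:ℝ), ENNReal.ofReal (r ^ (D-1)) * g r := by
  rw [powMeasure, lintegral_withDensity_eq_lintegral_mul_non_measurable _ (by fun_prop)
    (.of_forall fun x => ENNReal.ofReal_lt_top)]
  rfl

lemma hardy_upper (D p a b : ℝ) (hD : 0 < D) (hp : 1 < p)
    (hab : b / p < a / (p / (p - 1))) (hsum : a + b = D)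
    (f : ℝ → ℝ) (hf : Measurable f) :
    eLpNorm (fun r => r ^ (-a) * ∫ t in Set.Ioc (0 : ℝ) r, f t * t ^ (D - 1))
        (ENNReal.ofReal p) (powMeasure D) ≤
      ENNReal.ofReal (a / (p / (p - 1)) - b / p)⁻¹ *
        eLpNorm (fun r => r ^ b * f r) (ENNReal.ofReal p) (powMeasure D) := by
  have hp0 : (0:ℝ) < p := lt_trans one_pos hp
  have hp1 : (0:ℝ) < p - 1 := by linarith
  have hC : a / (p / (p - 1)) - b / p = a - D / p := by
    field_simp
    ring_nf
    nlinarith [hsum]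
  have hγ : 0 < a - D / p := by rw [← hC]; linarith
  rw [hC]
  have hpne : ENNReal.ofReal p ≠ 0 := (ENNReal.ofReal_pos.mpr hp0).ne'
  rw [eLpNorm_eq_lintegral_rpow_enorm_toReal hpne ENNReal.ofReal_ne_top,
    eLpNorm_eq_lintegral_rpow_enorm_toReal hpne ENNReal.ofReal_ne_top,
    ENNReal.toReal_ofReal hp0.le, lintegral_powMeasure, lintegral_powMeasure]
  set φ : ℝ → ℝ≥0∞ := fun t => (‖f t‖₊ : ℝ≥0∞) with hφdef
  have hφm : Measurable φ := by fun_prop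
  calc (∫⁻ r in Ioi (0:ℝ), ENNReal.ofReal (r ^ (D-1)) *
          (‖r ^ (-a) * ∫ t in Ioc (0:ℝ) r, f t * t ^ (D-1)‖₊ : ℝ≥0∞) ^ p) ^ (1/p)
      ≤ (∫⁻ r in Ioi (0:ℝ),
          (ENNReal.ofReal (r ^ (-a)) * ∫⁻ t in Ioc (0:ℝ) r, φ t * ENNReal.ofReal (t ^ (D-1))) ^ p
            * ENNReal.ofReal (r ^ (D-1))) ^ (1/p) := by
        refine ENNReal.rpow_le_rpow ?_ (by positivity)
        refine lintegral_mono_ae ((ae_restrict_iff' measurableSet_Ioi).mpr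
          (.of_forall fun r hr => ?_))
        have hr' : (0:ℝ) < r := hr
        rw [mul_comm]
        refine mul_le_mul_left (ENNReal.rpow_le_rpow ?_ hp0.le) _
        rw [nnnorm_mul, ENNReal.coe_mul, ← enorm_eq_nnnorm (r ^ (-a)), Real.enorm_eq_ofReal (Real.rpow_nonneg hr'.le _)]
        refine mul_le_mul_right ?_ _
        refine le_trans (enorm_integral_le_lintegral_enorm _) (le_of_eq ?_)
        refine setLIntegral_congr_fun measurableSet_Ioc (fun t htm => ?_)
        rw [enorm_mul, Real.enorm_eq_ofReal (Real.rpow_nonneg htm.1.le _)]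
        rfl
    _ ≤ (ENNReal.ofReal (a - D/p)⁻¹ ^ p *
          ∫⁻ t in Ioi (0:ℝ), (ENNReal.ofReal (t ^ b) * φ t) ^ p
            * ENNReal.ofReal (t ^ (D-1))) ^ (1/p) :=
        ENNReal.rpow_le_rpow (hardy_key hp hγ hsum hφm) (by positivity)
    _ = ENNReal.ofReal (a - D/p)⁻¹ *
          (∫⁻ r in Ioi (0:ℝ), ENNReal.ofReal (r ^ (D-1)) * (‖r ^ b * f r‖₊ : ℝ≥0∞) ^ p) ^ (1/p) := by
        rw [ENNReal.mul_rpow_of_nonneg _ _ (one_div_nonneg.mpr hp0.le),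
          ← ENNReal.rpow_mul, show p * (1/p) = 1 by field_simp, ENNReal.rpow_one]
        congr 2
        refine setLIntegral_congr_fun measurableSet_Ioi (fun t htm => ?_)
        have ht' : (0:ℝ) < t := htm
        rw [nnnorm_mul, ENNReal.coe_mul,
          ← enorm_eq_nnnorm (t ^ b), Real.enorm_eq_ofReal (Real.rpow_nonneg ht'.le _), mul_comm]

lemma hardy_lower (D p a b : ℝ) (hD : 0 < D) (hp : 1 < p)
    (hab : b / p < a / (p / (p - 1))) (hsum : a + b = D) (C : ℝ≥0∞)
    (hC : ∀ f : ℝ → ℝ, Measurable f →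
      eLpNorm (fun r => r ^ (-a) * ∫ t in Set.Ioc (0 : ℝ) r, f t * t ^ (D - 1))
          (ENNReal.ofReal p) (powMeasure D) ≤
        C * eLpNorm (fun r => r ^ b * f r) (ENNReal.ofReal p) (powMeasure D)) :
    ENNReal.ofReal (a / (p / (p - 1)) - b / p)⁻¹ ≤ C := by
  have hp0 : (0:ℝ) < p := lt_trans one_pos hp
  have hp1 : (0:ℝ) < p - 1 := by linarith
  have hCeq : a / (p / (p - 1)) - b / p = a - D / p := by
    field_simp
    ring_nf
    nlinarith [hsum]
  set γ : ℝ := a - D/p with hγdef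
  have hγ : 0 < γ := by rw [← hCeq]; linarith
  rw [hCeq]
  have hpne : ENNReal.ofReal p ≠ 0 := (ENNReal.ofReal_pos.mpr hp0).ne'
  have claim : ∀ ε : ℝ, ε ∈ Ioi (0:ℝ) → ENNReal.ofReal (γ + ε)⁻¹ ≤ C := by
    intro ε hε
    have hε' : (0:ℝ) < ε := hε
    have hεp : (0:ℝ) < ε * p := by positivity
    have hγε : (0:ℝ) < γ + ε := by linarith
    set f : ℝ → ℝ := (Ioc (0:ℝ) 1).indicator (fun t => t ^ (-b - D/p + ε)) with hfdef
    have hfm : Measurable f := Measurable.indicator (by fun_prop) measurableSet_Ioc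
    -- RHS norm
    have hN : eLpNorm (fun r => r ^ b * f r) (ENNReal.ofReal p) (powMeasure D)
        = ENNReal.ofReal (ε*p)⁻¹ ^ (1/p) := by
      rw [eLpNorm_eq_lintegral_rpow_enorm_toReal hpne ENNReal.ofReal_ne_top,
        ENNReal.toReal_ofReal hp0.le, lintegral_powMeasure]
      congr 1
      calc ∫⁻ r in Ioi (0:ℝ), ENNReal.ofReal (r ^ (D-1)) * (‖r ^ b * f r‖₊ : ℝ≥0∞) ^ p
          = ∫⁻ r in Ioi (0:ℝ),
              (Ioc (0:ℝ) 1).indicator (fun r => ENNReal.ofReal (r ^ (ε*p-1))) r := by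
            refine setLIntegral_congr_fun measurableSet_Ioi (fun r hr => ?_)
            have hr' : (0:ℝ) < r := hr
            by_cases h1 : r ≤ 1
            · rw [indicator_of_mem (Set.mem_Ioc.mpr ⟨hr', h1⟩), hfdef,
                indicator_of_mem (Set.mem_Ioc.mpr ⟨hr', h1⟩)]
              rw [← Real.rpow_add hr',
                ← enorm_eq_nnnorm (r ^ (b + (-b - D / p + ε))), Real.enorm_eq_ofReal (Real.rpow_nonneg hr'.le _),
                ENNReal.ofReal_rpow_of_pos (Real.rpow_pos_of_pos hr' _),
                ← Real.rpow_mul hr'.le, ofReal_rpow_mul_ofReal_rpow hr']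
              congr 2
              field_simp
              ring
            · rw [hfdef, indicator_of_notMem (fun hmem : r ∈ Ioc (0:ℝ) 1 => h1 hmem.2),
                indicator_of_notMem (fun hmem : r ∈ Ioc (0:ℝ) 1 => h1 hmem.2), mul_zero,
                nnnorm_zero, ENNReal.coe_zero, ENNReal.zero_rpow_of_pos hp0, mul_zero]
        _ = ENNReal.ofReal (ε*p)⁻¹ := by
            rw [lintegral_indicator measurableSet_Ioc,
              Measure.restrict_restrict measurableSet_Ioc,
              inter_eq_left.mpr Ioc_subset_Ioi_self,
              lint_Ioc_rpow (by linarith) zero_le_one,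
              sub_add_cancel, Real.one_rpow, one_div]
    -- value of the inner integral on (0,1]
    have hint : ∀ r : ℝ, r ∈ Ioc (0:ℝ) 1 →
        (∫ t in Ioc (0:ℝ) r, f t * t ^ (D-1)) = r ^ (γ+ε) / (γ+ε) := by
      intro r hr
      have hcg : ∀ t ∈ Ioc (0:ℝ) r, f t * t ^ (D-1) = t ^ (γ+ε-1) := by
        intro t htm
        rw [hfdef, indicator_of_mem (Set.mem_Ioc.mpr ⟨htm.1, le_trans htm.2 hr.2⟩),
          ← Real.rpow_add htm.1]
        congr 1
        rw [hγdef]; linarith [hsum]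
      rw [setIntegral_congr_fun measurableSet_Ioc hcg,
        ← intervalIntegral.integral_of_le hr.1.le,
        integral_rpow (Or.inl (by linarith : (-1:ℝ) < γ+ε-1)),
        Real.zero_rpow (by linarith : γ+ε-1+1 ≠ 0), sub_add_cancel, sub_zero]
    -- LHS norm lower bound
    have hL : ENNReal.ofReal (γ+ε)⁻¹ * ENNReal.ofReal (ε*p)⁻¹ ^ (1/p)
        ≤ eLpNorm (fun r => r ^ (-a) * ∫ t in Set.Ioc (0:ℝ) r, f t * t ^ (D-1))
            (ENNReal.ofReal p) (powMeasure D) := by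
      rw [eLpNorm_eq_lintegral_rpow_enorm_toReal hpne ENNReal.ofReal_ne_top,
        ENNReal.toReal_ofReal hp0.le, lintegral_powMeasure]
      have hre : ((γ+ε)⁻¹ ^ p) ^ (1/p) = (γ+ε)⁻¹ := by
        rw [← Real.rpow_mul (by positivity), mul_one_div_cancel hp0.ne', Real.rpow_one]
      calc ENNReal.ofReal (γ+ε)⁻¹ * ENNReal.ofReal (ε*p)⁻¹ ^ (1/p)
          = (ENNReal.ofReal ((γ+ε)⁻¹ ^ p) * ENNReal.ofReal (ε*p)⁻¹) ^ (1/p) := by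
            rw [ENNReal.mul_rpow_of_nonneg _ _ (one_div_nonneg.mpr hp0.le),
              ENNReal.ofReal_rpow_of_pos (show (0:ℝ) < (γ+ε)⁻¹ ^ p by positivity), hre]
        _ ≤ (∫⁻ r in Ioi (0:ℝ), ENNReal.ofReal (r ^ (D-1)) *
              (‖r ^ (-a) * ∫ t in Set.Ioc (0:ℝ) r, f t * t ^ (D-1)‖₊ : ℝ≥0∞) ^ p) ^ (1/p) := by
            refine ENNReal.rpow_le_rpow ?_ (one_div_nonneg.mpr hp0.le)
            calc ENNReal.ofReal ((γ+ε)⁻¹ ^ p) * ENNReal.ofReal (ε*p)⁻¹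
                = ∫⁻ r in Ioc (0:ℝ) 1,
                    ENNReal.ofReal ((γ+ε)⁻¹ ^ p) * ENNReal.ofReal (r ^ (ε*p-1)) := by
                  rw [lintegral_const_mul' _ _ ENNReal.ofReal_ne_top,
                    lint_Ioc_rpow (by linarith : (-1:ℝ) < ε*p-1) zero_le_one,
                    sub_add_cancel, Real.one_rpow, one_div]
              _ = ∫⁻ r in Ioc (0:ℝ) 1, ENNReal.ofReal (r ^ (D-1)) *
                    (‖r ^ (-a) * ∫ t in Set.Ioc (0:ℝ) r, f t * t ^ (D-1)‖₊ : ℝ≥0∞) ^ p := by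
                  refine setLIntegral_congr_fun measurableSet_Ioc (fun r hr => ?_)
                  have hr' : (0:ℝ) < r := hr.1
                  rw [hint r hr,
                    ← enorm_eq_nnnorm (r ^ (-a) * (r ^ (γ+ε) / (γ+ε))), Real.enorm_eq_ofReal (by positivity :
                      (0:ℝ) ≤ r ^ (-a) * (r ^ (γ+ε) / (γ+ε))),
                    ENNReal.ofReal_rpow_of_pos (by positivity),
                    ← ENNReal.ofReal_mul (Real.rpow_nonneg hr'.le _)]
                  rw [div_eq_mul_inv, ← mul_assoc, ← Real.rpow_add hr',
                    Real.mul_rpow (Real.rpow_nonneg hr'.le _) (by positivity),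
                    ← Real.rpow_mul hr'.le]
                  rw [show (-a + (γ+ε)) * p = ε*p - D from by rw [hγdef]; field_simp; ring]
                  rw [show r ^ (D-1) * (r ^ (ε*p-D) * (γ+ε)⁻¹ ^ p)
                      = (γ+ε)⁻¹ ^ p * (r ^ (D-1) * r ^ (ε*p-D)) from by ring,
                    ← Real.rpow_add hr',
                    show D - 1 + (ε*p - D) = ε*p - 1 from by ring,
                    ENNReal.ofReal_mul (by positivity)]
              _ ≤ ∫⁻ r in Ioi (0:ℝ), ENNReal.ofReal (r ^ (D-1)) *
                    (‖r ^ (-a) * ∫ t in Set.Ioc (0:ℝ) r, f t * t ^ (D-1)‖₊ : ℝ≥0∞) ^ p :=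
                  lintegral_mono_set Ioc_subset_Ioi_self
    -- combine
    have hNne : ENNReal.ofReal (ε*p)⁻¹ ^ (1/p) ≠ 0 :=
      (ENNReal.rpow_pos (ENNReal.ofReal_pos.mpr (by positivity)) ENNReal.ofReal_ne_top).ne'
    have hNtop : ENNReal.ofReal (ε*p)⁻¹ ^ (1/p) ≠ ∞ :=
      ENNReal.rpow_ne_top_of_nonneg (one_div_nonneg.mpr hp0.le) ENNReal.ofReal_ne_top
    have := le_trans hL (hC f hfm)
    rw [hN] at this
    exact (ENNReal.mul_le_mul_iff_left hNne hNtop).mp this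
  have htend : Filter.Tendsto (fun ε => ENNReal.ofReal (γ + ε)⁻¹) (nhdsWithin 0 (Ioi 0))
      (nhds (ENNReal.ofReal γ⁻¹)) := by
    refine Filter.Tendsto.mono_left ?_ nhdsWithin_le_nhds
    refine (ENNReal.continuous_ofReal.tendsto _).comp ?_
    have hca : ContinuousAt (fun ε : ℝ => (γ + ε)⁻¹) 0 :=
      ContinuousAt.inv₀ ((continuous_const.add continuous_id).continuousAt)
        (by simpa using hγ.ne')
    simpa using hca.tendsto
  exact le_of_tendsto htend (Filter.eventually_of_mem self_mem_nhdsWithin claim)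

/-- One-dimensional sharp Hardy inequality: for `1 < p < ∞`, `a/p' > b/p`, `a + b = D > 0`,
with `Hf(r) = ∫₀^r f(t) t^{D-1} dt`, one has
`‖r^{-a} Hf‖_{L^p(r^{D-1}dr)} ≤ C ‖r^b f‖_{L^p(r^{D-1}dr)}` with the sharp constant
`C = (a/p' - b/p)⁻¹`. -/
theorem hardy_sharp (D p a b : ℝ) (hD : 0 < D) (hp : 1 < p)
    (hab : b / p < a / (p / (p - 1))) (hsum : a + b = D) :
    (∀ f : ℝ → ℝ, Measurable f →
      eLpNorm (fun r => r ^ (-a) * ∫ t in Set.Ioc (0 : ℝ) r, f t * t ^ (D - 1))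
          (ENNReal.ofReal p) (powMeasure D) ≤
        ENNReal.ofReal (a / (p / (p - 1)) - b / p)⁻¹ *
          eLpNorm (fun r => r ^ b * f r) (ENNReal.ofReal p) (powMeasure D)) ∧
    (∀ C : ℝ≥0∞,
      (∀ f : ℝ → ℝ, Measurable f →
        eLpNorm (fun r => r ^ (-a) * ∫ t in Set.Ioc (0 : ℝ) r, f t * t ^ (D - 1))
            (ENNReal.ofReal p) (powMeasure D) ≤
          C * eLpNorm (fun r => r ^ b * f r) (ENNReal.ofReal p) (powMeasure D)) →
      ENNReal.ofReal (a / (p / (p - 1)) - b / p)⁻¹ ≤ C) := by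
  exact ⟨fun f hf => hardy_upper D p a b hD hp hab hsum f hf,
    fun C hC => hardy_lower D p a b hD hp hab hsum C hC⟩
end

section
/- Gauss summation applied to the Herbst constant: if a, b, c are real numbers with c > a + b, c not a nonpositive integer, a > 0, b > 0, then Σ_{m=0}^∞ Γ(a+m)Γ(b+m)/(Γ(1+m)Γ(c+m)) = Γ(a)Γ(b)Γ(c−a−b)/(Γ(c−a)Γ(c−b)). -/
open Real

open MeasureTheory intervalIntegral


noncomputable def cm (a : ℝ) (m : ℕ) : ℝ := Real.Gamma (a + m) / (Real.Gamma a * m.factorial)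

lemma cm_zero {a : ℝ} (ha : 0 < a) : cm a 0 = 1 := by
  have hG : Real.Gamma a ≠ 0 := (Real.Gamma_pos_of_pos ha).ne'
  simp [cm, div_self hG]

lemma cm_pos {a : ℝ} (ha : 0 < a) (m : ℕ) : 0 < cm a m := by
  apply div_pos (Real.Gamma_pos_of_pos (by positivity)) (by positivity)

lemma cm_succ {a : ℝ} (ha : 0 < a) (m : ℕ) :
    cm a (m + 1) = cm a m * ((a + m) / (m + 1)) := by
  have h2 : Real.Gamma (a + (m + 1 : ℕ)) = (a + m) * Real.Gamma (a + m) := by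
    push_cast
    rw [show a + ((m : ℝ) + 1) = (a + m) + 1 by ring, Real.Gamma_add_one (by positivity)]
  have hG : Real.Gamma a ≠ 0 := (Real.Gamma_pos_of_pos ha).ne'
  have hf : (m.factorial : ℝ) ≠ 0 := by positivity
  rw [cm, cm, h2, Nat.factorial_succ]
  push_cast
  field_simp

lemma tendsto_aux (a : ℝ) : Filter.Tendsto (fun m : ℕ => (a + m) / (m + 1)) Filter.atTop (nhds 1) := by
  have h0 : Filter.Tendsto (fun m : ℕ => (a - 1) / ((m : ℝ) + 1)) Filter.atTop (nhds 0) := by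
    apply Filter.Tendsto.div_atTop tendsto_const_nhds
    exact Filter.tendsto_atTop_add_const_right _ 1 tendsto_natCast_atTop_atTop
  have := h0.const_add 1
  simp only [add_zero] at this
  refine this.congr fun m => ?_
  have : (m : ℝ) + 1 ≠ 0 := by positivity
  field_simp
  ring

lemma summable_cm_pow {a x : ℝ} (ha : 0 < a) (hx : 0 ≤ x) (hx1 : x < 1) :
    Summable (fun m : ℕ => cm a m * x ^ m) := by
  rcases eq_or_lt_of_le hx with h0 | h0
  · apply summable_of_ne_finset_zero (s := {0})
    intro m hm
    simp only [Finset.mem_singleton] at hm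
    rw [← h0, zero_pow hm, mul_zero]
  · apply summable_of_ratio_test_tendsto_lt_one hx1
    · filter_upwards with m
      exact (mul_pos (cm_pos ha m) (pow_pos h0 m)).ne'
    · have key : ∀ m : ℕ, ‖cm a (m+1) * x ^ (m+1)‖ / ‖cm a m * x ^ m‖
          = (a + m) / (m + 1) * x := by
        intro m
        rw [Real.norm_eq_abs, Real.norm_eq_abs,
          abs_of_pos (mul_pos (cm_pos ha _) (pow_pos h0 _)),
          abs_of_pos (mul_pos (cm_pos ha _) (pow_pos h0 _)), cm_succ ha, pow_succ]
        rw [div_eq_iff (mul_pos (cm_pos ha m) (pow_pos h0 m)).ne']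
        ring
      simp only [key]
      simpa using (tendsto_aux a).mul_const x

lemma summable_cm_deriv {a x : ℝ} (ha : 0 < a) (hx : 0 < x) (hx1 : x < 1) :
    Summable (fun m : ℕ => cm a m * m * x ^ (m - 1)) := by
  apply summable_of_ratio_test_tendsto_lt_one hx1
  · filter_upwards [Filter.eventually_ge_atTop 1] with m hm
    have : (0:ℝ) < m := by exact_mod_cast hm
    exact (mul_pos (mul_pos (cm_pos ha m) this) (pow_pos hx _)).ne'
  · have key : ∀ᶠ m : ℕ in Filter.atTop,
        ‖cm a (m+1) * ((m+1:ℕ):ℝ) * x ^ (m+1-1)‖ / ‖cm a m * m * x ^ (m-1)‖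
        = (a + m) / m * x := by
      filter_upwards [Filter.eventually_ge_atTop 1] with m hm
      obtain ⟨k, rfl⟩ : ∃ k, m = k + 1 := ⟨m - 1, (Nat.succ_pred_eq_of_pos hm).symm⟩
      have h1 : k + 1 + 1 - 1 = k + 1 := rfl
      have h2 : k + 1 - 1 = k := rfl
      have hk1 : (0:ℝ) < (k:ℝ) + 1 := by positivity
      have A : (0:ℝ) < cm a (k+1+1) * ((k+1+1:ℕ):ℝ) * x ^ (k+1) :=
        mul_pos (mul_pos (cm_pos ha _) (by push_cast; positivity)) (pow_pos hx _)
      have B : (0:ℝ) < cm a (k+1) * ((k+1:ℕ):ℝ) * x ^ k :=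
        mul_pos (mul_pos (cm_pos ha _) (by push_cast; positivity)) (pow_pos hx _)
      rw [h1, h2, Real.norm_eq_abs, Real.norm_eq_abs, abs_of_pos A, abs_of_pos B,
        cm_succ ha (k+1), div_eq_iff B.ne', pow_succ]
      have hcm := (cm_pos ha (k+1)).ne'
      push_cast
      field_simp
    refine Filter.Tendsto.congr' (key.mono fun m hm => hm.symm) ?_
    have h0 : Filter.Tendsto (fun m : ℕ => (a + m) / m) Filter.atTop (nhds 1) := by
      have hz : Filter.Tendsto (fun m : ℕ => a / (m : ℝ)) Filter.atTop (nhds 0) :=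
        Filter.Tendsto.div_atTop tendsto_const_nhds tendsto_natCast_atTop_atTop
      have := hz.const_add 1
      simp only [add_zero] at this
      refine this.congr' ?_
      filter_upwards [Filter.eventually_ge_atTop 1] with m hm
      have : (m:ℝ) ≠ 0 := by positivity
      field_simp
      ring
    simpa using h0.mul_const x

lemma hasDerivAt_F {a : ℝ} (ha : 0 < a) {y : ℝ} (hy0 : 0 ≤ y) (hy1 : y < 1) :
    HasDerivAt (fun z => ∑' m : ℕ, cm a m * z ^ m)
      (∑' m : ℕ, cm a m * (m * y ^ (m - 1))) y := by
  set r : ℝ := (y + 1) / 2 with hr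
  have hr0 : 0 < r := by rw [hr]; linarith
  have hr1 : r < 1 := by rw [hr]; linarith
  have hyr : y < r := by rw [hr]; linarith
  have hbound : ∀ (m : ℕ) (z : ℝ), z ∈ Set.Ioo (-r) r →
      ‖cm a m * ((m : ℝ) * z ^ (m - 1))‖ ≤ cm a m * m * r ^ (m - 1) := by
    intro m z hz
    rw [Real.norm_eq_abs, abs_mul, abs_of_pos (cm_pos ha m), abs_mul, Nat.abs_cast,
      ← mul_assoc, abs_pow]
    have h1 : (0:ℝ) ≤ cm a m * m := mul_nonneg (cm_pos ha m).le (Nat.cast_nonneg m)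
    exact mul_le_mul_of_nonneg_left
      (pow_le_pow_left₀ (abs_nonneg z) (abs_lt.2 ⟨hz.1, hz.2⟩).le _) h1
  exact hasDerivAt_tsum_of_isPreconnected (summable_cm_deriv ha hr0 hr1)
    (isOpen_Ioo (a := -r) (b := r)) (convex_Ioo _ _).isPreconnected
    (fun m z _ => (hasDerivAt_pow m z).const_mul (cm a m))
    hbound (y₀ := 0) ⟨by linarith, by linarith⟩
    (by simpa using summable_cm_pow ha le_rfl one_pos)
    ⟨by linarith, hyr⟩

lemma F_zero {a : ℝ} (ha : 0 < a) : ∑' m : ℕ, cm a m * (0:ℝ) ^ m = 1 := by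
  rw [tsum_eq_single 0 (fun m hm => by rw [zero_pow hm, mul_zero])]
  simp [cm_zero ha]

lemma deriv_eq_ode {a : ℝ} (ha : 0 < a) {y : ℝ} (hy0 : 0 ≤ y) (hy1 : y < 1) :
    ∑' m : ℕ, cm a m * (m * y ^ (m - 1))
      = a * (∑' m : ℕ, cm a m * y ^ m) / (1 - y) := by
  rcases eq_or_lt_of_le hy0 with h0 | h0
  · rw [← h0, F_zero ha]
    rw [tsum_eq_single 1 ?_]
    · simp [cm_succ ha 0, cm_zero ha]
    · intro m hm
      rcases Nat.eq_zero_or_pos m with rfl | hm1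
      · simp
      · obtain ⟨k, rfl⟩ : ∃ k, m = k + 1 := ⟨m - 1, (Nat.succ_pred_eq_of_pos hm1).symm⟩
        have hk : k ≠ 0 := by rintro rfl; exact hm rfl
        simp [zero_pow hk]
  · have hS1 : Summable (fun m : ℕ => cm a m * ((m : ℝ) * y ^ (m - 1))) := by
      simpa [mul_assoc] using summable_cm_deriv ha h0 hy1
    have hF : Summable (fun m : ℕ => cm a m * y ^ m) := summable_cm_pow ha hy0 hy1
    have key : (∑' m : ℕ, cm a m * ((m : ℝ) * y ^ (m - 1)))
        = a * (∑' m : ℕ, cm a m * y ^ m)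
          + y * (∑' m : ℕ, cm a m * ((m : ℝ) * y ^ (m - 1))) := by
      conv_lhs => rw [Summable.tsum_eq_zero_add hS1]
      conv_lhs => simp only [Nat.cast_zero, zero_mul, mul_zero, zero_add]
      have e1 : ∀ m : ℕ, cm a (m + 1) * (((m + 1 : ℕ) : ℝ) * y ^ (m + 1 - 1))
          = a * (cm a m * y ^ m) + y * (cm a m * ((m : ℝ) * y ^ (m - 1))) := by
        intro m
        rw [cm_succ ha m]
        rcases Nat.eq_zero_or_pos m with rfl | hm1
        · simp
          ring
        · obtain ⟨k, rfl⟩ : ∃ k, m = k + 1 := ⟨m - 1, (Nat.succ_pred_eq_of_pos hm1).symm⟩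
          have h2 : k + 1 - 1 = k := rfl
          have h3 : k + 1 + 1 - 1 = k + 1 := rfl
          rw [h2, h3]
          have hne : ((k:ℝ) + 1) + 1 ≠ 0 := by positivity
          push_cast
          field_simp
          ring
      simp only [e1]
      rw [Summable.tsum_add (hF.mul_left a) (hS1.mul_left y), tsum_mul_left, tsum_mul_left]
    have h1y : (1:ℝ) - y ≠ 0 := by linarith
    rw [eq_div_iff h1y]
    linarith [key]

lemma binom {a x : ℝ} (ha : 0 < a) (hx : 0 ≤ x) (hx1 : x < 1) :
    ∑' m : ℕ, cm a m * x ^ m = (1 - x) ^ (-a) := by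
  set F : ℝ → ℝ := fun z => ∑' m : ℕ, cm a m * z ^ m with hF
  set G : ℝ → ℝ := fun z => (1 - z) ^ a * F z with hG
  have hGderiv : ∀ y, 0 ≤ y → y < 1 → HasDerivAt G 0 y := by
    intro y hy0 hy1
    have h1y : (0:ℝ) < 1 - y := by linarith
    have hd1 : HasDerivAt (fun z : ℝ => (1 - z) ^ a)
        (a * (1 - y) ^ (a - 1) * (-1)) y :=
      (Real.hasDerivAt_rpow_const (p := a) (Or.inl h1y.ne')).comp y
        ((hasDerivAt_id y).const_sub 1)
    have hd2 : HasDerivAt F (a * F y / (1 - y)) y := by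
      have := hasDerivAt_F ha hy0 hy1
      rwa [deriv_eq_ode ha hy0 hy1] at this
    have := hd1.mul hd2
    refine this.congr_deriv ?_
    rw [Real.rpow_sub h1y, Real.rpow_one]
    field_simp
    ring
  have hcont : ContinuousOn G (Set.Icc 0 x) := by
    intro y hy
    exact (hGderiv y hy.1 (lt_of_le_of_lt hy.2 hx1)).continuousAt.continuousWithinAt
  have hconst := constant_of_has_deriv_right_zero hcont
    (fun y hy => (hGderiv y hy.1 (hy.2.trans hx1)).hasDerivWithinAt)
    x (Set.right_mem_Icc.2 hx)
  have hG0 : G 0 = 1 := by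
    rw [hG]
    simp only [sub_zero, Real.one_rpow, one_mul, hF]
    exact F_zero ha
  rw [hG0] at hconst
  have h1x : (0:ℝ) < 1 - x := by linarith
  have hGx : (1 - x) ^ a * F x = 1 := hconst
  have hpow : (0:ℝ) < (1 - x) ^ a := Real.rpow_pos_of_pos h1x a
  rw [show (∑' m : ℕ, cm a m * x ^ m) = F x from rfl, Real.rpow_neg h1x.le]
  field_simp
  linarith [hGx]

lemma betaAux_eqOn {p q : ℝ} : ∀ t ∈ Set.Icc (0:ℝ) 1,
    ((t : ℂ) ^ ((p : ℂ) - 1) * (1 - (t : ℂ)) ^ ((q : ℂ) - 1))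
      = ((t ^ (p - 1) * (1 - t) ^ (q - 1) : ℝ) : ℂ) := by
  intro t ht
  have h1 : ((t : ℂ)) ^ ((p : ℂ) - 1) = ((t ^ (p - 1) : ℝ) : ℂ) := by
    rw [show ((p : ℂ) - 1) = ((p - 1 : ℝ) : ℂ) by push_cast; ring]
    exact (Complex.ofReal_cpow ht.1 _).symm
  have h2 : (1 - (t : ℂ)) ^ ((q : ℂ) - 1) = (((1 - t) ^ (q - 1) : ℝ) : ℂ) := by
    rw [show (1 - (t : ℂ)) = (((1 - t : ℝ)) : ℂ) by push_cast; ring,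
      show ((q : ℂ) - 1) = ((q - 1 : ℝ) : ℂ) by push_cast; ring]
    exact (Complex.ofReal_cpow (by linarith [ht.2]) _).symm
  rw [h1, h2]
  push_cast
  ring

lemma realBeta_intervalIntegrable {p q : ℝ} (hp : 0 < p) (hq : 0 < q) :
    IntervalIntegrable (fun t : ℝ => t ^ (p - 1) * (1 - t) ^ (q - 1)) volume 0 1 := by
  have hC := Complex.betaIntegral_convergent (u := (p : ℂ)) (v := (q : ℂ))
    (by simpa using hp) (by simpa using hq)
  rw [intervalIntegrable_iff_integrableOn_Ioc_of_le zero_le_one] at hC ⊢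
  have hre : IntegrableOn (fun x : ℝ =>
      ((x : ℂ) ^ ((p:ℂ) - 1) * (1 - (x:ℂ)) ^ ((q:ℂ) - 1)).re) (Set.Ioc 0 1) volume :=
    hC.re
  refine hre.congr_fun ?_ measurableSet_Ioc
  intro t ht
  show ((t : ℂ) ^ ((p:ℂ) - 1) * (1 - (t:ℂ)) ^ ((q:ℂ) - 1)).re = _
  rw [betaAux_eqOn t ⟨ht.1.le, ht.2⟩, Complex.ofReal_re]

lemma realBeta {p q : ℝ} (hp : 0 < p) (hq : 0 < q) :
    ∫ t in (0:ℝ)..1, t ^ (p - 1) * (1 - t) ^ (q - 1)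
      = Real.Gamma p * Real.Gamma q / Real.Gamma (p + q) := by
  have hG := Complex.Gamma_mul_Gamma_eq_betaIntegral
    (s := (p : ℂ)) (t := (q : ℂ)) (by simpa using hp) (by simpa using hq)
  have hB : Complex.betaIntegral (p : ℂ) (q : ℂ)
      = ((∫ t in (0:ℝ)..1, t ^ (p - 1) * (1 - t) ^ (q - 1) : ℝ) : ℂ) := by
    rw [Complex.betaIntegral, ← intervalIntegral.integral_ofReal]
    refine intervalIntegral.integral_congr ?_
    intro t ht
    rw [Set.uIcc_of_le zero_le_one] at ht
    exact betaAux_eqOn t ht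
  rw [hB, Complex.Gamma_ofReal, Complex.Gamma_ofReal, show (p : ℂ) + q = ((p + q : ℝ) : ℂ) by push_cast; ring, Complex.Gamma_ofReal, ← Complex.ofReal_mul] at hG
  have hGpq : Real.Gamma (p + q) ≠ 0 := (Real.Gamma_pos_of_pos (by linarith)).ne'
  rw [← Complex.ofReal_mul] at hG
  have heq := Complex.ofReal_injective hG
  field_simp
  linarith [heq]

/-- Gauss summation applied to the Herbst constant: for `a, b > 0`, `c > a + b`,
`c` not a nonpositive integer,
`Σ_{m=0}^∞ Γ(a+m)Γ(b+m)/(Γ(1+m)Γ(c+m)) = Γ(a)Γ(b)Γ(c-a-b)/(Γ(c-a)Γ(c-b))`. -/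
theorem gauss_summation_herbst (a b c : ℝ) (ha : 0 < a) (hb : 0 < b)
    (hc : a + b < c) (hcz : ∀ n : ℕ, c ≠ -(n : ℝ)) :
    ∑' m : ℕ,
        Real.Gamma (a + m) * Real.Gamma (b + m) /
          (Real.Gamma (1 + m) * Real.Gamma (c + m)) =
      Real.Gamma a * Real.Gamma b * Real.Gamma (c - a - b) /
        (Real.Gamma (c - a) * Real.Gamma (c - b)) := by
  have hK : 0 < Real.Gamma (c - b) := Real.Gamma_pos_of_pos (by linarith)
  have hGa : 0 < Real.Gamma a := Real.Gamma_pos_of_pos ha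
  have hGca : 0 < Real.Gamma (c - a) := Real.Gamma_pos_of_pos (by linarith)
  have hGb : 0 < Real.Gamma b := Real.Gamma_pos_of_pos hb
  have hGcab : 0 < Real.Gamma (c - a - b) := Real.Gamma_pos_of_pos (by linarith)
  set f : ℕ → ℝ := fun m => Real.Gamma (a + m) * Real.Gamma (b + m) /
      (Real.Gamma (1 + m) * Real.Gamma (c + m)) with hf
  set g : ℕ → ℝ → ℝ := fun m t =>
      cm a m * (Real.Gamma a / Real.Gamma (c - b)) *
        (t ^ ((b + m) - 1) * (1 - t) ^ ((c - b) - 1)) with hg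
  -- positivity of f
  have hfpos : ∀ m : ℕ, 0 ≤ f m := by
    intro m
    have h1 := Real.Gamma_pos_of_pos (show (0:ℝ) < a + m by positivity)
    have h2 := Real.Gamma_pos_of_pos (show (0:ℝ) < b + m by positivity)
    have h3 := Real.Gamma_pos_of_pos (show (0:ℝ) < 1 + m by positivity)
    have h4 := Real.Gamma_pos_of_pos (show (0:ℝ) < c + m by linarith [Nat.cast_nonneg (α := ℝ) m])
    rw [hf]
    positivity
  -- f m as an integral
  have h_fm : ∀ m : ℕ, f m = ∫ t in Set.Ioo (0:ℝ) 1, g m t := by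
    intro m
    have hint : ∫ t in Set.Ioo (0:ℝ) 1, g m t
        = cm a m * (Real.Gamma a / Real.Gamma (c - b)) *
          ∫ t in (0:ℝ)..1, t ^ ((b + m) - 1) * (1 - t) ^ ((c - b) - 1) := by
      rw [intervalIntegral.integral_of_le zero_le_one,
        ← MeasureTheory.integral_Ioc_eq_integral_Ioo, ← MeasureTheory.integral_const_mul]
    rw [hint, realBeta (by positivity) (by linarith),
      show b + (m:ℝ) + (c - b) = c + m by ring]
    have h3 : Real.Gamma (1 + (m:ℝ)) = m.factorial := by
      rw [show (1:ℝ) + (m:ℝ) = (m:ℝ) + 1 by ring, Real.Gamma_nat_eq_factorial]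
    have h4 := (Real.Gamma_pos_of_pos (show (0:ℝ) < c + m by
      linarith [Nat.cast_nonneg (α := ℝ) m])).ne'
    have h5 : (m.factorial : ℝ) ≠ 0 := by positivity
    simp only [hf, hg, cm, h3]
    field_simp
  -- integrability of g m
  have hgi : ∀ m : ℕ, IntegrableOn (g m) (Set.Ioo (0:ℝ) 1) volume := by
    intro m
    have := (realBeta_intervalIntegrable (p := b + m) (q := c - b)
      (by positivity) (by linarith))
    rw [intervalIntegrable_iff_integrableOn_Ioc_of_le zero_le_one] at this
    exact ((this.mono_set Set.Ioo_subset_Ioc_self).const_mul _)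
  -- nonnegativity of g m on Ioo
  have hgnn : ∀ m : ℕ, ∀ t ∈ Set.Ioo (0:ℝ) 1, 0 ≤ g m t := by
    intro m t ht
    have h1 : (0:ℝ) < t := ht.1
    have h2 : (0:ℝ) < 1 - t := by linarith [ht.2]
    have := (cm_pos ha m)
    rw [hg]
    positivity
  -- measurability
  have hgm : ∀ m : ℕ, AEMeasurable (g m) (volume.restrict (Set.Ioo (0:ℝ) 1)) := by
    intro m
    refine ContinuousOn.aemeasurable ?_ measurableSet_Ioo
    intro t ht
    have h1 : ContinuousAt (fun t : ℝ => t ^ ((b + m) - 1)) t :=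
      Real.continuousAt_rpow_const t _ (Or.inl (ne_of_gt ht.1))
    have h2 : ContinuousAt (fun t : ℝ => (1 - t) ^ ((c - b) - 1)) t := by
      have : (0:ℝ) < 1 - t := by linarith [ht.2]
      exact (Real.continuousAt_rpow_const (1 - t) _ (Or.inl (ne_of_gt this))).comp
        ((continuous_const.sub continuous_id).continuousAt)
    exact (continuousAt_const.mul (h1.mul h2)).continuousWithinAt
  -- the ENNReal computation
  have key : ∑' m : ℕ, ENNReal.ofReal (f m)
      = ENNReal.ofReal ((Real.Gamma a / Real.Gamma (c - b)) *
          (Real.Gamma b * Real.Gamma (c - a - b) / Real.Gamma (c - a))) := by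
    have step1 : ∀ m : ℕ, ENNReal.ofReal (f m)
        = ∫⁻ t in Set.Ioo (0:ℝ) 1, ENNReal.ofReal (g m t) := by
      intro m
      rw [h_fm m]
      exact MeasureTheory.ofReal_integral_eq_lintegral_ofReal (hgi m)
        ((ae_restrict_iff' measurableSet_Ioo).2 (Filter.Eventually.of_forall (hgnn m)))
    simp_rw [step1]
    have hswap := MeasureTheory.lintegral_tsum
      (μ := volume.restrict (Set.Ioo (0:ℝ) 1))
      (f := fun m t => ENNReal.ofReal (g m t))
      (fun m => ENNReal.measurable_ofReal.comp_aemeasurable (hgm m))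
    rw [← hswap]
    have step2 : ∀ t ∈ Set.Ioo (0:ℝ) 1,
        ∑' m : ℕ, ENNReal.ofReal (g m t)
          = ENNReal.ofReal ((Real.Gamma a / Real.Gamma (c - b)) *
              (t ^ (b - 1) * (1 - t) ^ ((c - a - b) - 1))) := by
      intro t ht
      have ht0 : (0:ℝ) < t := ht.1
      have ht1 : (0:ℝ) < 1 - t := by linarith [ht.2]
      set C : ℝ := (Real.Gamma a / Real.Gamma (c - b)) *
        (t ^ (b - 1) * (1 - t) ^ ((c - b) - 1)) with hC
      have hCnn : 0 ≤ C := by positivity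
      have hgC : ∀ m : ℕ, g m t = C * (cm a m * t ^ m) := by
        intro m
        simp only [hg, hC]
        rw [show b + (m:ℝ) - 1 = (b - 1) + m by ring,
          Real.rpow_add ht0, Real.rpow_natCast]
        ring
      calc ∑' m : ℕ, ENNReal.ofReal (g m t)
          = ∑' m : ℕ, ENNReal.ofReal C * ENNReal.ofReal (cm a m * t ^ m) := by
            refine tsum_congr fun m => ?_
            rw [hgC m, ENNReal.ofReal_mul hCnn]
        _ = ENNReal.ofReal C * ∑' m : ℕ, ENNReal.ofReal (cm a m * t ^ m) :=
            ENNReal.tsum_mul_left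
        _ = ENNReal.ofReal C * ENNReal.ofReal ((1 - t) ^ (-a)) := by
            rw [← ENNReal.ofReal_tsum_of_nonneg
              (fun m => (mul_pos (cm_pos ha m) (pow_pos ht0 m)).le)
              (summable_cm_pow ha ht0.le ht.2),
              binom ha ht0.le ht.2]
        _ = ENNReal.ofReal ((Real.Gamma a / Real.Gamma (c - b)) *
              (t ^ (b - 1) * (1 - t) ^ ((c - a - b) - 1))) := by
            rw [← ENNReal.ofReal_mul hCnn, hC]
            congr 1
            rw [show ((c - a - b) - 1 : ℝ) = ((c - b) - 1) + (-a) by ring,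
              Real.rpow_add ht1]
            ring
    rw [MeasureTheory.setLIntegral_congr_fun measurableSet_Ioo
      step2]
    have hbi : IntegrableOn
        (fun t : ℝ => (Real.Gamma a / Real.Gamma (c - b)) *
          (t ^ (b - 1) * (1 - t) ^ ((c - a - b) - 1))) (Set.Ioo (0:ℝ) 1) volume := by
      have := realBeta_intervalIntegrable (p := b) (q := c - a - b) hb (by linarith)
      rw [intervalIntegrable_iff_integrableOn_Ioc_of_le zero_le_one] at this
      exact ((this.mono_set Set.Ioo_subset_Ioc_self).const_mul _)
    rw [← MeasureTheory.ofReal_integral_eq_lintegral_ofReal hbi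
      ((ae_restrict_iff' measurableSet_Ioo).2 (Filter.Eventually.of_forall ?_))]
    · congr 1
      rw [MeasureTheory.integral_const_mul, ← MeasureTheory.integral_Ioc_eq_integral_Ioo,
        ← intervalIntegral.integral_of_le zero_le_one,
        realBeta hb (by linarith), show b + (c - a - b) = c - a by ring]
    · intro t ht
      have ht0 : (0:ℝ) < t := ht.1
      have ht1 : (0:ℝ) < 1 - t := by linarith [ht.2]
      positivity
  -- conclude
  have hRnn : 0 ≤ (Real.Gamma a / Real.Gamma (c - b)) *
      (Real.Gamma b * Real.Gamma (c - a - b) / Real.Gamma (c - a)) := by positivity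
  calc ∑' m : ℕ, f m
      = ∑' m : ℕ, (ENNReal.ofReal (f m)).toReal := by
        refine tsum_congr fun m => ?_
        rw [ENNReal.toReal_ofReal (hfpos m)]
    _ = (∑' m : ℕ, ENNReal.ofReal (f m)).toReal :=
        (ENNReal.tsum_toReal_eq (fun m => ENNReal.ofReal_ne_top)).symm
    _ = (Real.Gamma a / Real.Gamma (c - b)) *
          (Real.Gamma b * Real.Gamma (c - a - b) / Real.Gamma (c - a)) := by
        rw [key, ENNReal.toReal_ofReal hRnn]
    _ = Real.Gamma a * Real.Gamma b * Real.Gamma (c - a - b) /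
          (Real.Gamma (c - a) * Real.Gamma (c - b)) := by
        field_simp
end

section
/- Finiteness of the sharp Stein–Weiss constant integral: let D > 1, 1 < p < ∞, 0 < α, β < D/p', γ = α − β < D/p. Then the integral ∫₀^∞ t^{D/p − α + β − 1} ∫₀^π (t² + 1 − 2t cos φ)^{(α−D)/2} sin^{D−2}φ dφ dt is finite. -/
open Real MeasureTheory Set

/-- Jordan-type lower bound: `(φ/π)^2 ≤ 1 - cos φ` on `[0, π]`. -/
private lemma sw_cos_lower {φ : ℝ} (h0 : 0 ≤ φ) (hπ : φ ≤ π) :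
    (φ / π) ^ 2 ≤ 1 - Real.cos φ := by
  have hπ0 : (0:ℝ) < π := Real.pi_pos
  have h1 : φ / π ≤ Real.sin (φ / 2) := by
    have h := Real.mul_le_sin (x := φ / 2) (by linarith) (by linarith)
    calc φ / π = 2 / π * (φ / 2) := by ring
      _ ≤ Real.sin (φ / 2) := h
  have h2 : (φ / π) ^ 2 ≤ Real.sin (φ / 2) ^ 2 :=
    pow_le_pow_left₀ (by positivity) h1 2
  have h3 : Real.cos (φ / 2) ^ 2 = 1 / 2 + Real.cos φ / 2 := by
    have := Real.cos_sq (φ / 2)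
    rwa [show 2 * (φ / 2) = φ by ring] at this
  have h4 := Real.sin_sq_add_cos_sq (φ / 2)
  have h5 := Real.cos_le_one φ
  nlinarith

/-- Integrability of `φ^c * sin^s φ` on `(0, π]` when `c ≤ 0`, `s > -1`, `c + s > -1`. -/
private lemma sw_sin_integrable {c s : ℝ} (hc : c ≤ 0) (hs : -1 < s) (hcs : -1 < c + s) :
    IntegrableOn (fun φ : ℝ => φ ^ c * Real.sin φ ^ s) (Ioc 0 π) := by
  have hπ : (0:ℝ) < π := Real.pi_pos
  have hmeas : Measurable fun φ : ℝ => φ ^ c * Real.sin φ ^ s :=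
    (measurable_id.pow measurable_const).mul (Real.measurable_sin.pow measurable_const)
  have hsplit : Ioc (0:ℝ) π = Ioc 0 (π/2) ∪ Ioc (π/2) π :=
    (Ioc_union_Ioc_eq_Ioc (by linarith) (by linarith)).symm
  rw [hsplit]
  apply IntegrableOn.union
  · set M : ℝ := max 1 ((π / 2) ^ (-s)) with hM
    have hg : IntegrableOn (fun φ : ℝ => M * φ ^ (c + s)) (Ioc 0 (π/2)) := by
      have h := intervalIntegral.intervalIntegrable_rpow' (a := 0) (b := π/2) hcs
      rw [intervalIntegrable_iff_integrableOn_Ioc_of_le (by positivity)] at h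
      exact h.const_mul M
    apply Integrable.mono' hg hmeas.aestronglyMeasurable.restrict
    filter_upwards [ae_restrict_mem measurableSet_Ioc] with φ hφ
    obtain ⟨hφ0, hφ2⟩ := hφ
    have hsin0 : 0 ≤ Real.sin φ := Real.sin_nonneg_of_nonneg_of_le_pi hφ0.le (by linarith)
    have hbound : Real.sin φ ^ s ≤ M * φ ^ s := by
      rcases le_or_gt 0 s with h | h
      · calc Real.sin φ ^ s ≤ φ ^ s := Real.rpow_le_rpow hsin0 (Real.sin_le hφ0.le) h
          _ = 1 * φ ^ s := (one_mul _).symm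
          _ ≤ M * φ ^ s :=
            mul_le_mul_of_nonneg_right (le_max_left _ _) (Real.rpow_nonneg hφ0.le _)
      · have h1 : 2 / π * φ ≤ Real.sin φ := Real.mul_le_sin hφ0.le hφ2
        have h2 : Real.sin φ ^ s ≤ (2 / π * φ) ^ s :=
          Real.rpow_le_rpow_of_nonpos (by positivity) h1 h.le
        have h3 : ((2:ℝ) / π * φ) ^ s = (2/π) ^ s * φ ^ s := Real.mul_rpow (by positivity) hφ0.le
        have h4 : ((2:ℝ)/π) ^ s = (π/2) ^ (-s) := by
          rw [show (2:ℝ)/π = (π/2)⁻¹ by rw [inv_div], Real.inv_rpow (by positivity),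
            ← Real.rpow_neg (by positivity)]
        calc Real.sin φ ^ s ≤ (π/2) ^ (-s) * φ ^ s := by rw [← h4, ← h3]; exact h2
          _ ≤ M * φ ^ s :=
            mul_le_mul_of_nonneg_right (le_max_right _ _) (Real.rpow_nonneg hφ0.le _)
    have hnn : 0 ≤ φ ^ c * Real.sin φ ^ s :=
      mul_nonneg (Real.rpow_nonneg hφ0.le _) (Real.rpow_nonneg hsin0 _)
    rw [Real.norm_eq_abs, abs_of_nonneg hnn]
    calc φ ^ c * Real.sin φ ^ s ≤ φ ^ c * (M * φ ^ s) :=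
          mul_le_mul_of_nonneg_left hbound (Real.rpow_nonneg hφ0.le _)
      _ = M * φ ^ (c + s) := by rw [Real.rpow_add hφ0]; ring
  · rcases le_or_gt 0 s with h | h
    · have hg : IntegrableOn (fun _ : ℝ => ((π:ℝ)/2) ^ c) (Ioc (π/2) π) :=
        (integrableOn_const_iff (by finiteness)).mpr (Or.inr measure_Ioc_lt_top)
      apply Integrable.mono' hg hmeas.aestronglyMeasurable.restrict
      filter_upwards [ae_restrict_mem measurableSet_Ioc] with φ hφ
      obtain ⟨hφ0, hφ2⟩ := hφ
      have hφ0' : (0:ℝ) < φ := by linarith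
      have hsin0 : 0 ≤ Real.sin φ := Real.sin_nonneg_of_nonneg_of_le_pi hφ0'.le hφ2
      have hnn : 0 ≤ φ ^ c * Real.sin φ ^ s :=
        mul_nonneg (Real.rpow_nonneg hφ0'.le _) (Real.rpow_nonneg hsin0 _)
      rw [Real.norm_eq_abs, abs_of_nonneg hnn]
      calc φ ^ c * Real.sin φ ^ s ≤ ((π:ℝ)/2) ^ c * 1 := by
            apply mul_le_mul
            · exact Real.rpow_le_rpow_of_nonpos (by positivity) hφ0.le hc
            · exact Real.rpow_le_one hsin0 (Real.sin_le_one φ) h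
            · exact Real.rpow_nonneg hsin0 _
            · positivity
        _ = ((π:ℝ)/2) ^ c := mul_one _
    · have hg : IntegrableOn
          (fun φ : ℝ => ((π:ℝ)/2) ^ c * (π/2) ^ (-s) * (π - φ) ^ s) (Ioc (π/2) π) := by
        have h1 := intervalIntegral.intervalIntegrable_rpow' (a := 0) (b := π/2) hs
        have h2 := (h1.comp_sub_left π).symm
        rw [show π - 0 = π by ring, show π - π/2 = π/2 by ring] at h2
        rw [intervalIntegrable_iff_integrableOn_Ioc_of_le (by linarith)] at h2
        exact h2.const_mul _
      apply Integrable.mono' hg hmeas.aestronglyMeasurable.restrict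
      have hae : ∀ᵐ φ : ℝ ∂(volume.restrict (Ioc (π/2) π)), φ ≠ π := by
        apply ae_restrict_of_ae
        rw [ae_iff]
        simp only [not_not, setOf_eq_eq_singleton]
        exact measure_singleton π
      filter_upwards [ae_restrict_mem measurableSet_Ioc, hae] with φ hφ hφπ
      obtain ⟨hφ0, hφ2⟩ := hφ
      have hφ0' : (0:ℝ) < φ := by linarith
      have hπφ : 0 < π - φ := lt_of_le_of_ne (by linarith) (by intro hh; exact hφπ (by linarith))
      have hsin0 : 0 ≤ Real.sin φ := Real.sin_nonneg_of_nonneg_of_le_pi hφ0'.le hφ2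
      have hnn : 0 ≤ φ ^ c * Real.sin φ ^ s :=
        mul_nonneg (Real.rpow_nonneg hφ0'.le _) (Real.rpow_nonneg hsin0 _)
      rw [Real.norm_eq_abs, abs_of_nonneg hnn]
      have hsinb : Real.sin φ ^ s ≤ (π/2) ^ (-s) * (π - φ) ^ s := by
        have h1 : 2 / π * (π - φ) ≤ Real.sin φ := by
          rw [← Real.sin_pi_sub]
          exact Real.mul_le_sin (by linarith) (by linarith)
        have h2 : Real.sin φ ^ s ≤ (2 / π * (π - φ)) ^ s :=
          Real.rpow_le_rpow_of_nonpos (by positivity) h1 h.le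
        have h3 : ((2:ℝ) / π * (π - φ)) ^ s = (2/π) ^ s * (π - φ) ^ s :=
          Real.mul_rpow (by positivity) hπφ.le
        have h4 : ((2:ℝ)/π) ^ s = (π/2) ^ (-s) := by
          rw [show (2:ℝ)/π = (π/2)⁻¹ by rw [inv_div], Real.inv_rpow (by positivity),
            ← Real.rpow_neg (by positivity)]
        rw [← h4, ← h3]; exact h2
      calc φ ^ c * Real.sin φ ^ s ≤ ((π:ℝ)/2) ^ c * ((π/2) ^ (-s) * (π - φ) ^ s) := by
            apply mul_le_mul
            · exact Real.rpow_le_rpow_of_nonpos (by positivity) hφ0.le hc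
            · exact hsinb
            · exact Real.rpow_nonneg hsin0 _
            · positivity
        _ = ((π:ℝ)/2) ^ c * (π/2) ^ (-s) * (π - φ) ^ s := by ring

private lemma sw_abs_integrable {r : ℝ} (hr : -1 < r) :
    IntegrableOn (fun t : ℝ => |t - 1| ^ r) (Ioc (1/2 : ℝ) 2) := by
  have h := intervalIntegral.intervalIntegrable_rpow' (a := 0) (b := 1) hr
  have hsplit : Ioc (1/2:ℝ) 2 = Ioc (1/2) 1 ∪ Ioc 1 2 :=
    (Ioc_union_Ioc_eq_Ioc (by norm_num) (by norm_num)).symm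
  rw [hsplit]
  apply IntegrableOn.union
  · have h1 : IntervalIntegrable (fun x : ℝ => (1 - x) ^ r) volume (1/2) 1 := by
      have h2 := (h.comp_sub_left 1).symm
      rw [show (1:ℝ) - 0 = 1 by ring, show (1:ℝ) - 1 = 0 by ring] at h2
      exact h2.mono_set (by rw [uIcc_of_le (by norm_num : (1/2:ℝ) ≤ 1),
        uIcc_of_le (by norm_num : (0:ℝ) ≤ 1)]; exact Icc_subset_Icc (by norm_num) le_rfl)
    rw [intervalIntegrable_iff_integrableOn_Ioc_of_le (by norm_num)] at h1
    exact h1.congr_fun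
      (fun t ht => by rw [abs_sub_comm, abs_of_nonneg (by linarith [ht.2] : (0:ℝ) ≤ 1 - t)])
      measurableSet_Ioc
  · have h1 : IntervalIntegrable (fun x : ℝ => (x - 1) ^ r) volume 1 2 := by
      have h2 := h.comp_sub_right 1
      norm_num at h2
      exact h2
    rw [intervalIntegrable_iff_integrableOn_Ioc_of_le (by norm_num)] at h1
    exact h1.congr_fun
      (fun t ht => by rw [abs_of_nonneg (by linarith [ht.1] : (0:ℝ) ≤ t - 1)])
      measurableSet_Ioc

private lemma sw_meas (a s e : ℝ) :
    Measurable fun t : ℝ => t ^ e *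
      ∫ φ in Ioc (0:ℝ) π, (t ^ 2 + 1 - 2 * t * Real.cos φ) ^ a * Real.sin φ ^ s := by
  apply (measurable_id.pow measurable_const).mul
  have h : Measurable fun q : ℝ × ℝ =>
      (q.1 ^ 2 + 1 - 2 * q.1 * Real.cos q.2) ^ a * Real.sin q.2 ^ s := by
    apply Measurable.mul
    · apply Measurable.pow _ measurable_const
      fun_prop
    · exact (Real.measurable_sin.comp measurable_snd).pow measurable_const
  exact (h.stronglyMeasurable.integral_prod_right
    (f := fun t φ : ℝ => (t ^ 2 + 1 - 2 * t * Real.cos φ) ^ a * Real.sin φ ^ s)).measurable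

private lemma sw_base_nonneg {t : ℝ} (ht : 0 ≤ t) (φ : ℝ) :
    (0:ℝ) ≤ t^2+1-2*t*Real.cos φ := by
  nlinarith only [Real.cos_le_one φ, sq_nonneg (t-1), ht,
    mul_nonneg ht (sub_nonneg.2 (Real.cos_le_one φ))]

private lemma sw_base_A {t : ℝ} (ht0 : 0 < t) (ht2 : t ≤ 1/2) (φ : ℝ) :
    (1/4:ℝ) ≤ t^2+1-2*t*Real.cos φ := by
  nlinarith only [Real.cos_le_one φ, ht0, ht2,
    mul_nonneg ht0.le (sub_nonneg.2 (Real.cos_le_one φ)),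
    mul_nonneg (by linarith : (0:ℝ) ≤ 1/2 - t) (by linarith : (0:ℝ) ≤ 3/2 - t)]

private lemma sw_base_C {t : ℝ} (ht2 : 2 < t) (φ : ℝ) :
    (t^2/4:ℝ) ≤ t^2+1-2*t*Real.cos φ := by
  nlinarith only [Real.cos_le_one φ, ht2,
    mul_nonneg (by linarith : (0:ℝ) ≤ t) (sub_nonneg.2 (Real.cos_le_one φ)),
    mul_nonneg (by linarith : (0:ℝ) ≤ 3*t-2) (by linarith : (0:ℝ) ≤ t-2)]

private lemma sw_base_B {t φ θ : ℝ} (ht0 : 1/2 < t) (hθ0 : 0 ≤ θ) (hθ1 : θ ≤ 1)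
    (hφ0 : 0 ≤ φ) (hφπ : φ ≤ π) :
    θ * |t-1|^2 + (1-θ) * (φ/π)^2 ≤ t^2+1-2*t*Real.cos φ := by
  have hcos := sw_cos_lower hφ0 hφπ
  nlinarith only [hcos, ht0, hθ0, hθ1, sq_abs (t-1), sq_nonneg (t-1), sq_nonneg (φ/π),
    mul_nonneg (by linarith : (0:ℝ) ≤ 2*t-1)
      (by nlinarith only [Real.cos_le_one φ] : (0:ℝ) ≤ 1 - Real.cos φ),
    mul_nonneg hθ0 (sq_nonneg (t-1)), mul_nonneg hθ0 (sq_nonneg (φ/π)),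
    mul_nonneg (by linarith : (0:ℝ) ≤ 1-θ) (sq_nonneg (φ/π)),
    mul_nonneg (by linarith : (0:ℝ) ≤ 1-θ) (sq_nonneg (φ/π))]

set_option maxHeartbeats 1000000 in
/-- Finiteness of the sharp Stein–Weiss constant integral: for `D > 1`, `1 < p < ∞`,
`0 < α`, `β < D/p'`, `γ = α - β < D/p`, the integral
`∫₀^∞ t^{D/p - α + β - 1} ∫₀^π (t² + 1 - 2t cos φ)^{(α-D)/2} sin^{D-2} φ dφ dt`
is finite. -/
theorem stein_weiss_constant_finite (D p α β : ℝ) (hD : 1 < D) (hp : 1 < p)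
    (hα : 0 < α) (hβ : β < D / (p / (p - 1))) (hγ : α - β < D / p) :
    IntegrableOn
      (fun t => t ^ (D / p - α + β - 1) *
        ∫ φ in (0 : ℝ)..Real.pi,
          (t ^ 2 + 1 - 2 * t * Real.cos φ) ^ ((α - D) / 2) * Real.sin φ ^ (D - 2))
      (Set.Ioi (0 : ℝ)) := by
  have hπ : (0:ℝ) < π := Real.pi_pos
  have hp0 : (0:ℝ) < p := by linarith only [hp]
  have hp1 : (0:ℝ) < p - 1 := by linarith only [hp]
  have hβ' : β < D - D / p := by
    have h : D / (p / (p - 1)) = D - D / p := by field_simp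
    rw [h] at hβ; exact hβ
  have hDp : (0:ℝ) < D / p := by positivity
  have hαD : α < D := by linarith only [hβ', hγ, hDp]
  simp only [intervalIntegral.integral_of_le Real.pi_pos.le]
  set a := (α - D)/2 with ha_def
  set s := D - 2 with hs_def
  set e := D / p - α + β - 1 with he_def
  have ha : a < 0 := by rw [ha_def]; linarith only [hαD]
  have hs : -1 < s := by rw [hs_def]; linarith only [hD]
  have he : -1 < e := by rw [he_def]; linarith only [hγ]
  have heC : e + 2*a < -1 := by rw [he_def, ha_def]; linarith only [hβ']
  set δ := D - α with hδ_def
  have hδ : 0 < δ := by rw [hδ_def]; linarith only [hαD]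
  set θ := (max 0 ((1-α)/δ) + min 1 (1/δ)) / 2 with hθ_def
  have h1δ : (1-α)/δ < 1/δ := by
    rw [div_lt_div_iff₀ hδ hδ]
    nlinarith only [hα, hδ]
  have h2δ : (1-α)/δ < 1 := by rw [div_lt_one hδ, hδ_def]; linarith only [hD]
  have h3δ : (0:ℝ) < 1/δ := by positivity
  have hmaxlt : max 0 ((1-α)/δ) < min 1 (1/δ) :=
    max_lt (lt_min one_pos h3δ) (lt_min h2δ h1δ)
  have hθmax : max 0 ((1-α)/δ) < θ := by rw [hθ_def]; linarith only [hmaxlt]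
  have hθmin : θ < min 1 (1/δ) := by rw [hθ_def]; linarith only [hmaxlt]
  have hθ0 : 0 ≤ θ := le_trans (le_max_left _ _) hθmax.le
  have hθ1 : θ ≤ 1 := le_trans hθmin.le (min_le_left _ _)
  have hθδ : θ * δ < 1 := by
    have h := lt_of_lt_of_le hθmin (min_le_right _ _)
    calc θ * δ < 1/δ * δ := mul_lt_mul_of_pos_right h hδ
      _ = 1 := by field_simp
  have hθδ2 : 1 - α < θ * δ := by
    have h := lt_of_le_of_lt (le_max_right 0 ((1-α)/δ)) hθmax
    calc 1 - α = (1-α)/δ * δ := by field_simp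
      _ < θ * δ := mul_lt_mul_of_pos_right h hδ
  set c1 := 2*θ*a with hc1_def
  set c2 := 2*(1-θ)*a with hc2_def
  have hc1_eq : c1 = -(θ*δ) := by rw [hc1_def, ha_def, hδ_def]; ring
  have hc1a : -1 < c1 := by rw [hc1_eq]; linarith only [hθδ]
  have hc1b : c1 ≤ 0 := by
    rw [hc1_eq]
    have h : 0 ≤ θ * δ := mul_nonneg hθ0 hδ.le
    linarith only [h]
  have hc2b : c2 ≤ 0 := by
    rw [hc2_def]
    nlinarith only [hθ1, ha]
  have hc2s : -1 < c2 + s := by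
    have hx : c2 + s = θ * δ + α - 2 := by rw [hc2_def, ha_def, hs_def, hδ_def]; ring
    rw [hx]; linarith only [hθδ2]
  have hG_nonneg : ∀ t : ℝ, 0 < t → ∀ φ ∈ Ioc (0:ℝ) π,
      0 ≤ (t ^ 2 + 1 - 2 * t * Real.cos φ) ^ a * Real.sin φ ^ s := by
    intro t ht φ hφ
    exact mul_nonneg (Real.rpow_nonneg (sw_base_nonneg ht.le φ) _)
      (Real.rpow_nonneg (Real.sin_nonneg_of_nonneg_of_le_pi hφ.1.le hφ.2) _)
  have hI_nonneg : ∀ t : ℝ, 0 < t →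
      0 ≤ ∫ φ in Ioc (0:ℝ) π, (t ^ 2 + 1 - 2 * t * Real.cos φ) ^ a * Real.sin φ ^ s :=
    fun t ht => setIntegral_nonneg measurableSet_Ioc (hG_nonneg t ht)
  have hSint : IntegrableOn (fun φ : ℝ => Real.sin φ ^ s) (Ioc 0 π) := by
    have h := sw_sin_integrable (c := 0) le_rfl hs (by simpa using hs)
    simpa [Real.rpow_zero] using h
  set Sv := ∫ φ in Ioc (0:ℝ) π, Real.sin φ ^ s with hSv_def
  have hSv : 0 ≤ Sv := setIntegral_nonneg measurableSet_Ioc fun φ hφ =>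
    Real.rpow_nonneg (Real.sin_nonneg_of_nonneg_of_le_pi hφ.1.le hφ.2) _
  have hSBint : IntegrableOn (fun φ : ℝ => φ ^ c2 * Real.sin φ ^ s) (Ioc 0 π) :=
    sw_sin_integrable hc2b hs hc2s
  set SB := ∫ φ in Ioc (0:ℝ) π, φ ^ c2 * Real.sin φ ^ s with hSB_def
  have hSB : 0 ≤ SB := setIntegral_nonneg measurableSet_Ioc fun φ hφ =>
    mul_nonneg (Real.rpow_nonneg hφ.1.le _)
      (Real.rpow_nonneg (Real.sin_nonneg_of_nonneg_of_le_pi hφ.1.le hφ.2) _)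
  have hmeasF := sw_meas a s e
  have huni : Ioi (0:ℝ) = Ioc 0 (1/2) ∪ (Ioc (1/2) 2 ∪ Ioi 2) := by
    rw [Ioc_union_Ioi_eq_Ioi (by norm_num : (1/2:ℝ) ≤ 2),
        Ioc_union_Ioi_eq_Ioi (by norm_num : (0:ℝ) ≤ 1/2)]
  rw [huni]
  refine IntegrableOn.union ?_ (IntegrableOn.union ?_ ?_)
  · -- Region A : t ∈ (0, 1/2]
    apply Integrable.mono' (g := fun t => ((1/4:ℝ) ^ a * Sv) * t ^ e)
    · have h := intervalIntegral.intervalIntegrable_rpow' (a := 0) (b := 1/2) he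
      rw [intervalIntegrable_iff_integrableOn_Ioc_of_le (by norm_num)] at h
      exact h.const_mul _
    · exact hmeasF.aestronglyMeasurable.restrict
    · filter_upwards [ae_restrict_mem measurableSet_Ioc] with t ht
      obtain ⟨ht0, ht2⟩ := ht
      have hIb : (∫ φ in Ioc (0:ℝ) π, (t ^ 2 + 1 - 2 * t * Real.cos φ) ^ a * Real.sin φ ^ s)
          ≤ (1/4:ℝ) ^ a * Sv := by
        have hmono := integral_mono_of_nonneg
          (f := fun φ => (t ^ 2 + 1 - 2 * t * Real.cos φ) ^ a * Real.sin φ ^ s)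
          (g := fun φ => (1/4:ℝ) ^ a * Real.sin φ ^ s)
          (μ := volume.restrict (Ioc 0 π))
          (by filter_upwards [ae_restrict_mem measurableSet_Ioc] with φ hφ
              exact hG_nonneg t ht0 φ hφ)
          (hSint.const_mul _)
          (by filter_upwards [ae_restrict_mem measurableSet_Ioc] with φ hφ
              exact mul_le_mul_of_nonneg_right
                (Real.rpow_le_rpow_of_nonpos (by norm_num) (sw_base_A ht0 ht2 φ) ha.le)
                (Real.rpow_nonneg (Real.sin_nonneg_of_nonneg_of_le_pi hφ.1.le hφ.2) _))
        rwa [integral_const_mul] at hmono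
      have hF0 : 0 ≤ t ^ e *
          ∫ φ in Ioc (0:ℝ) π, (t ^ 2 + 1 - 2 * t * Real.cos φ) ^ a * Real.sin φ ^ s :=
        mul_nonneg (Real.rpow_nonneg ht0.le _) (hI_nonneg t ht0)
      rw [Real.norm_eq_abs, abs_of_nonneg hF0]
      calc t ^ e * ∫ φ in Ioc (0:ℝ) π, (t ^ 2 + 1 - 2 * t * Real.cos φ) ^ a * Real.sin φ ^ s
          ≤ t ^ e * ((1/4:ℝ) ^ a * Sv) :=
            mul_le_mul_of_nonneg_left hIb (Real.rpow_nonneg ht0.le _)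
        _ = ((1/4:ℝ) ^ a * Sv) * t ^ e := mul_comm _ _
  · -- Region B : t ∈ (1/2, 2]
    set Me := max ((2:ℝ) ^ e) ((2:ℝ) ^ (-e)) with hMe_def
    apply Integrable.mono' (g := fun t => (Me * ((π:ℝ) ^ (-c2) * SB)) * |t - 1| ^ c1)
    · exact (sw_abs_integrable hc1a).const_mul _
    · exact hmeasF.aestronglyMeasurable.restrict
    · have hne : ∀ᵐ t : ℝ ∂(volume.restrict (Ioc (1/2:ℝ) 2)), t ≠ 1 := by
        apply ae_restrict_of_ae
        rw [ae_iff]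
        simp only [not_not, setOf_eq_eq_singleton]
        exact measure_singleton 1
      filter_upwards [ae_restrict_mem measurableSet_Ioc, hne] with t ht htne
      obtain ⟨ht0, ht2⟩ := ht
      have ht0' : (0:ℝ) < t := by linarith only [ht0]
      have hu : 0 < |t - 1| := abs_pos.2 (sub_ne_zero.2 htne)
      have hIb : (∫ φ in Ioc (0:ℝ) π, (t ^ 2 + 1 - 2 * t * Real.cos φ) ^ a * Real.sin φ ^ s)
          ≤ (|t-1| ^ c1 * (π:ℝ) ^ (-c2)) * SB := by
        have hmono := integral_mono_of_nonneg
          (f := fun φ => (t ^ 2 + 1 - 2 * t * Real.cos φ) ^ a * Real.sin φ ^ s)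
          (g := fun φ => (|t-1| ^ c1 * (π:ℝ) ^ (-c2)) * (φ ^ c2 * Real.sin φ ^ s))
          (μ := volume.restrict (Ioc 0 π))
          (by filter_upwards [ae_restrict_mem measurableSet_Ioc] with φ hφ
              exact hG_nonneg t ht0' φ hφ)
          (hSBint.const_mul _)
          ?_
        · rwa [integral_const_mul] at hmono
        filter_upwards [ae_restrict_mem measurableSet_Ioc] with φ hφ
        obtain ⟨hφ0, hφπ⟩ := hφ
        have hφπ0 : 0 < φ / π := by positivity
        have hsin0 : 0 ≤ Real.sin φ := Real.sin_nonneg_of_nonneg_of_le_pi hφ0.le hφπ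
        have hLB : |t-1| ^ ((2:ℝ)*θ) * (φ/π) ^ ((2:ℝ)*(1-θ)) ≤ t^2+1-2*t*Real.cos φ := by
          have e1 : |t-1| ^ ((2:ℝ)*θ) = (|t-1|^2) ^ θ := by
            rw [Real.rpow_mul (abs_nonneg _), Real.rpow_two]
          have e2 : (φ/π) ^ ((2:ℝ)*(1-θ)) = ((φ/π)^2) ^ (1-θ) := by
            rw [Real.rpow_mul hφπ0.le, Real.rpow_two]
          have hgeom := Real.geom_mean_le_arith_mean2_weighted (w₁ := θ) (w₂ := 1-θ)
            (p₁ := |t-1|^2) (p₂ := (φ/π)^2) hθ0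
            (by linarith only [hθ1]) (sq_nonneg (|t-1|)) (sq_nonneg (φ/π)) (by ring)
          have hq := sw_base_B ht0 hθ0 hθ1 hφ0.le hφπ
          rw [e1, e2]
          linarith only [hgeom, hq]
        have hpos : 0 < |t-1| ^ ((2:ℝ)*θ) * (φ/π) ^ ((2:ℝ)*(1-θ)) :=
          mul_pos (Real.rpow_pos_of_pos hu _) (Real.rpow_pos_of_pos hφπ0 _)
        have h2 := Real.rpow_le_rpow_of_nonpos hpos hLB ha.le
        rw [Real.mul_rpow (Real.rpow_nonneg (abs_nonneg _) _) (Real.rpow_nonneg hφπ0.le _),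
          ← Real.rpow_mul (abs_nonneg _), ← Real.rpow_mul hφπ0.le] at h2
        have h3 : (t^2+1-2*t*Real.cos φ) ^ a * Real.sin φ ^ s
            ≤ (|t-1| ^ (2*θ*a) * (φ/π) ^ (2*(1-θ)*a)) * Real.sin φ ^ s :=
          mul_le_mul_of_nonneg_right h2 (Real.rpow_nonneg hsin0 _)
        have h4 : (φ/π) ^ (2*(1-θ)*a) = (π:ℝ) ^ (-c2) * φ ^ c2 := by
          rw [div_eq_mul_inv, Real.mul_rpow hφ0.le (by positivity),
            Real.inv_rpow hπ.le, ← Real.rpow_neg hπ.le, hc2_def]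
          ring
        calc (t^2+1-2*t*Real.cos φ) ^ a * Real.sin φ ^ s
            ≤ (|t-1| ^ (2*θ*a) * (φ/π) ^ (2*(1-θ)*a)) * Real.sin φ ^ s := h3
          _ = (|t-1| ^ c1 * (π:ℝ) ^ (-c2)) * (φ ^ c2 * Real.sin φ ^ s) := by
              rw [h4, hc1_def]; ring
      have hF0 : 0 ≤ t ^ e *
          ∫ φ in Ioc (0:ℝ) π, (t ^ 2 + 1 - 2 * t * Real.cos φ) ^ a * Real.sin φ ^ s :=
        mul_nonneg (Real.rpow_nonneg ht0'.le _) (hI_nonneg t ht0')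
      rw [Real.norm_eq_abs, abs_of_nonneg hF0]
      have hMe : t ^ e ≤ Me := by
        rcases le_or_gt 0 e with h | h
        · exact le_trans (Real.rpow_le_rpow ht0'.le ht2 h) (le_max_left _ _)
        · have h1 : t ^ e ≤ (1/2:ℝ) ^ e :=
            Real.rpow_le_rpow_of_nonpos (by norm_num) ht0.le h.le
          have h2 : ((1:ℝ)/2) ^ e = (2:ℝ) ^ (-e) := by
            rw [show (1:ℝ)/2 = (2:ℝ)⁻¹ by norm_num, Real.inv_rpow (by norm_num),
              ← Real.rpow_neg (by norm_num)]
          exact le_trans h1 (h2 ▸ le_max_right _ _)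
      calc t ^ e * ∫ φ in Ioc (0:ℝ) π, (t ^ 2 + 1 - 2 * t * Real.cos φ) ^ a * Real.sin φ ^ s
          ≤ t ^ e * ((|t-1| ^ c1 * (π:ℝ) ^ (-c2)) * SB) :=
            mul_le_mul_of_nonneg_left hIb (Real.rpow_nonneg ht0'.le _)
        _ ≤ Me * ((|t-1| ^ c1 * (π:ℝ) ^ (-c2)) * SB) := by
            apply mul_le_mul_of_nonneg_right hMe
            exact mul_nonneg (mul_nonneg (Real.rpow_nonneg (abs_nonneg _) _)
              (Real.rpow_nonneg hπ.le _)) hSB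
        _ = (Me * ((π:ℝ) ^ (-c2) * SB)) * |t - 1| ^ c1 := by ring
  · -- Region C : t ∈ (2, ∞)
    apply Integrable.mono' (g := fun t => ((4:ℝ) ^ (-a) * Sv) * t ^ (e + 2*a))
    · exact (integrableOn_Ioi_rpow_of_lt heC (by norm_num : (0:ℝ) < 2)).const_mul _
    · exact hmeasF.aestronglyMeasurable.restrict
    · filter_upwards [ae_restrict_mem measurableSet_Ioi] with t ht
      have ht2 : (2:ℝ) < t := ht
      have ht0 : (0:ℝ) < t := by linarith only [ht2]
      have hIb : (∫ φ in Ioc (0:ℝ) π, (t ^ 2 + 1 - 2 * t * Real.cos φ) ^ a * Real.sin φ ^ s)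
          ≤ (t^2/4:ℝ) ^ a * Sv := by
        have hmono := integral_mono_of_nonneg
          (f := fun φ => (t ^ 2 + 1 - 2 * t * Real.cos φ) ^ a * Real.sin φ ^ s)
          (g := fun φ => (t^2/4:ℝ) ^ a * Real.sin φ ^ s)
          (μ := volume.restrict (Ioc 0 π))
          (by filter_upwards [ae_restrict_mem measurableSet_Ioc] with φ hφ
              exact hG_nonneg t ht0 φ hφ)
          (hSint.const_mul _)
          (by filter_upwards [ae_restrict_mem measurableSet_Ioc] with φ hφ
              exact mul_le_mul_of_nonneg_right
                (Real.rpow_le_rpow_of_nonpos (by positivity) (sw_base_C ht2 φ) ha.le)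
                (Real.rpow_nonneg (Real.sin_nonneg_of_nonneg_of_le_pi hφ.1.le hφ.2) _))
        rwa [integral_const_mul] at hmono
      have hF0 : 0 ≤ t ^ e *
          ∫ φ in Ioc (0:ℝ) π, (t ^ 2 + 1 - 2 * t * Real.cos φ) ^ a * Real.sin φ ^ s :=
        mul_nonneg (Real.rpow_nonneg ht0.le _) (hI_nonneg t ht0)
      rw [Real.norm_eq_abs, abs_of_nonneg hF0]
      have hA : ((t^2/4:ℝ)) ^ a = (4:ℝ) ^ (-a) * t ^ ((2:ℝ)*a) := by
        rw [show (t^2/4 : ℝ) = t^(2:ℝ) * (4:ℝ)⁻¹ by rw [Real.rpow_two]; ring,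
          Real.mul_rpow (by positivity) (by norm_num),
          ← Real.rpow_mul ht0.le, Real.inv_rpow (by norm_num : (0:ℝ) ≤ 4),
          ← Real.rpow_neg (by norm_num : (0:ℝ) ≤ 4)]
        ring
      have hB : t ^ e * t ^ ((2:ℝ)*a) = t ^ (e + 2*a) := (Real.rpow_add ht0 _ _).symm
      calc t ^ e * ∫ φ in Ioc (0:ℝ) π, (t ^ 2 + 1 - 2 * t * Real.cos φ) ^ a * Real.sin φ ^ s
          ≤ t ^ e * ((t^2/4:ℝ) ^ a * Sv) :=
            mul_le_mul_of_nonneg_left hIb (Real.rpow_nonneg ht0.le _)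
        _ = ((4:ℝ) ^ (-a) * Sv) * (t ^ e * t ^ ((2:ℝ)*a)) := by rw [hA]; ring
        _ = ((4:ℝ) ^ (-a) * Sv) * t ^ (e + 2*a) := by rw [hB]
end
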